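/- arXiv:2012.10933 — 6 statements merged into one kernel-verified Lean document; each statement's English description precedes it below -/
import Mathlib

section
/- Let G be a connected self-centered simple graph, i.e., rad(G) = diam(G) = d, with d ≥ 2. Then the eccentricity matrix ε(G) has at least two positive eigenvalues. In particular, no self-centered graph of diameter at least 2 has exactly one positive ε-eigenvalue. -/
open Finset Polynomial

noncomputable def ecc {V : Type*} [Fintype V] (G : SimpleGraph V) (u : V) : ℕ :=
  Finset.univ.sup (G.dist u)

noncomputable def eccMatrix {V : Type*} [Fintype V] (G : SimpleGraph V) :
    Matrix V V ℝ := fun u v =>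
  if G.dist u v = min (ecc G u) (ecc G v) then (G.dist u v : ℝ) else 0

theorem eccMatrix_isHermitian {V : Type*} [Fintype V] (G : SimpleGraph V) :
    (eccMatrix G).IsHermitian := by
  unfold Matrix.IsHermitian
  ext u v
  simp only [Matrix.conjTranspose_apply, eccMatrix, star_trivial]
  rw [SimpleGraph.dist_comm, min_comm]

/-- Number of positive eigenvalues (with multiplicity) of a real symmetric matrix. -/
noncomputable def posEigCount {V : Type*} [Fintype V] [DecidableEq V]
    {A : Matrix V V ℝ} (hA : A.IsHermitian) : ℕ :=
  (Finset.univ.filter fun i => 0 < hA.eigenvalues i).card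

/-- The join of two simple graphs: disjoint union plus all edges in between. -/
def graphJoin {α β : Type*} (G : SimpleGraph α) (H : SimpleGraph β) :
    SimpleGraph (α ⊕ β) where
  Adj x y := match x, y with
    | Sum.inl a, Sum.inl b => G.Adj a b
    | Sum.inr a, Sum.inr b => H.Adj a b
    | _, _ => True
  symm := ⟨by rintro (a|a) (b|b) h <;> first | exact G.adj_symm h | exact H.adj_symm h | trivial⟩
  loopless := ⟨by rintro (a|a) h <;> first | exact G.irrefl h | exact H.irrefl h⟩

/-- The disjoint union of two simple graphs. -/
def graphSum {α β : Type*} (G : SimpleGraph α) (H : SimpleGraph β) :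
    SimpleGraph (α ⊕ β) where
  Adj x y := match x, y with
    | Sum.inl a, Sum.inl b => G.Adj a b
    | Sum.inr a, Sum.inr b => H.Adj a b
    | _, _ => False
  symm := ⟨by rintro (a|a) (b|b) h <;> first | exact G.adj_symm h | exact H.adj_symm h | trivial⟩
  loopless := ⟨by rintro (a|a) h <;> first | exact G.irrefl h | exact H.irrefl h⟩

/-- Disjoint union of blocks indexed by `ι`; block `i` has `r i` vertices and is a
clique when `P i` holds and a coclique (independent set) otherwise. -/
def blocksGraph {ι : Type*} (r : ι → ℕ) (P : ι → Prop) :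
    SimpleGraph (Σ i, Fin (r i)) where
  Adj x y := x ≠ y ∧ x.1 = y.1 ∧ P x.1
  symm := ⟨by rintro x y ⟨h1, h2, h3⟩; exact ⟨h1.symm, h2.symm, h2 ▸ h3⟩⟩
  loopless := ⟨fun x h => h.1 rfl⟩

open Matrix

/-- Spectral decomposition of the quadratic form of a real symmetric matrix. -/
lemma quad_decomp_aux {V : Type*} [Fintype V] [DecidableEq V] {A : Matrix V V ℝ}
    (hA : A.IsHermitian) (z : V → ℝ) :
    z ⬝ᵥ A *ᵥ z = ∑ i, hA.eigenvalues i *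
      ((star (hA.eigenvectorUnitary : Matrix V V ℝ) *ᵥ z) i)^2 := by
  set U := (hA.eigenvectorUnitary : Matrix V V ℝ)
  set c := star U *ᵥ z with hc
  conv_lhs => rw [hA.spectral_theorem, Unitary.conjStarAlgAut_apply]
  rw [← Matrix.mulVec_mulVec, ← Matrix.mulVec_mulVec, Matrix.dotProduct_mulVec]
  have hvm : z ᵥ* U = c := by
    rw [hc, Matrix.star_eq_conjTranspose, Matrix.conjTranspose_eq_transpose_of_trivial,
      Matrix.mulVec_transpose]
  rw [hvm]
  simp only [Matrix.mulVec_diagonal, dotProduct, Function.comp_apply,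
    RCLike.ofReal_real_eq_id, id_eq]
  exact Finset.sum_congr rfl fun i _ => by ring

/-- If the quadratic form of a real symmetric matrix is positive definite on a
two-dimensional family, the matrix has at least two positive eigenvalues. -/
lemma two_le_posEigCount_aux {V : Type*} [Fintype V] [DecidableEq V] {A : Matrix V V ℝ}
    (hA : A.IsHermitian) (x y : V → ℝ)
    (hQ : ∀ α β : ℝ, ¬(α = 0 ∧ β = 0) →
      0 < (α • x + β • y) ⬝ᵥ A *ᵥ (α • x + β • y)) :
    2 ≤ posEigCount hA := by
  by_contra hlt
  push_neg at hlt
  set P := Finset.univ.filter fun i => 0 < hA.eigenvalues i with hP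
  have hcard : P.card ≤ 1 := by unfold posEigCount at hlt; rw [hP]; omega
  set U := (hA.eigenvectorUnitary : Matrix V V ℝ)
  let L : (ℝ × ℝ) →ₗ[ℝ] (↥P → ℝ) :=
    (LinearMap.funLeft ℝ ℝ (Subtype.val)).comp
      ((Matrix.mulVecLin (star U)).comp
        (((LinearMap.fst ℝ ℝ ℝ).smulRight x) + ((LinearMap.snd ℝ ℝ ℝ).smulRight y)))
  have hnotinj : ¬ Function.Injective L := by
    intro hinj
    have h2 : Module.finrank ℝ (ℝ × ℝ) ≤ Module.finrank ℝ (↥P → ℝ) :=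
      LinearMap.finrank_le_finrank_of_injective hinj
    simp only [Module.finrank_self, Module.finrank_prod, Module.finrank_pi] at h2
    rw [Fintype.card_coe] at h2
    omega
  rw [Function.not_injective_iff] at hnotinj
  obtain ⟨p, q, hpq, hne⟩ := hnotinj
  set r := p - q with hr
  have hr0 : r ≠ 0 := sub_ne_zero.mpr hne
  have hLr : L r = 0 := by rw [hr, map_sub, hpq, sub_self]
  set z := r.1 • x + r.2 • y with hz
  have hzero : ∀ i ∈ P, (star U *ᵥ z) i = 0 := by
    intro i hi
    have := congrFun hLr ⟨i, hi⟩
    simpa [L, Matrix.mulVecLin_apply] using this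
  have hQz : 0 < z ⬝ᵥ A *ᵥ z := by
    apply hQ
    intro ⟨h1, h2⟩
    exact hr0 (Prod.ext h1 h2)
  rw [quad_decomp_aux hA z] at hQz
  have hnonpos : ∑ i, hA.eigenvalues i * ((star U *ᵥ z) i)^2 ≤ 0 := by
    apply Finset.sum_nonpos
    intro i _
    by_cases hi : i ∈ P
    · rw [hzero i hi]; simp
    · have : ¬ 0 < hA.eigenvalues i := by simpa [hP] using hi
      exact mul_nonpos_of_nonpos_of_nonneg (le_of_not_gt this) (sq_nonneg _)
  linarith

/-- a connected self-centered graph of diameter `d ≥ 2` has at least two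
positive eccentricity eigenvalues. -/
theorem stmt1 {V : Type*} [Fintype V] [DecidableEq V] (G : SimpleGraph V)
    (hconn : G.Connected) (d : ℕ) (hd : 2 ≤ d) (hecc : ∀ u, ecc G u = d) :
    2 ≤ posEigCount (eccMatrix_isHermitian G) := by
  haveI : Nonempty V := hconn.nonempty
  set M := eccMatrix G with hM
  have hMentry : ∀ u v, M u v = if G.dist u v = d then (d:ℝ) else 0 := by
    intro u v
    simp only [hM, eccMatrix, hecc, min_self]
    split <;> rename_i h <;> simp [h]
  have hMnn : ∀ u v, 0 ≤ M u v := by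
    intro u v; rw [hMentry]; split <;> positivity
  have hMle : ∀ u v, M u v ≤ d := by
    intro u v; rw [hMentry]; split <;> [exact le_refl _; positivity]
  have hMdiag : ∀ u, M u u = 0 := by
    intro u; rw [hMentry]; simp [SimpleGraph.dist_self]; omega
  obtain ⟨a⟩ := ‹Nonempty V›
  have hsup : ∃ v, G.dist a v = d := by
    obtain ⟨v, -, hv⟩ := Finset.exists_mem_eq_sup Finset.univ Finset.univ_nonempty (G.dist a)
    exact ⟨v, by rw [← hv]; exact hecc a⟩
  obtain ⟨c, hac⟩ := hsup
  obtain ⟨p, hp⟩ := (hconn a c).exists_walk_length_eq_dist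
  rw [hac] at hp
  cases p with
  | nil => simp at hp; omega
  | cons h q =>
    rename_i b
    have hab : G.dist a b = 1 := SimpleGraph.dist_eq_one_iff_adj.mpr h
    have hq : q.length = d - 1 := by simp at hp; omega
    have hbc : G.dist b c = d - 1 := by
      have h1 : G.dist b c ≤ d - 1 := hq ▸ SimpleGraph.dist_le q
      have h2 : G.dist a c ≤ G.dist a b + G.dist b c := hconn.dist_triangle
      omega
    obtain ⟨w, hbw⟩ : ∃ w, G.dist b w = d := by
      obtain ⟨v, -, hv⟩ := Finset.exists_mem_eq_sup Finset.univ Finset.univ_nonempty (G.dist b)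
      exact ⟨v, by rw [← hv]; exact hecc b⟩
    -- the relevant matrix entries
    have hMac : M a c = d := by rw [hMentry]; simp [hac]
    have hMca : M c a = d := by rw [hMentry, SimpleGraph.dist_comm]; simp [hac]
    have hMbw : M b w = d := by rw [hMentry]; simp [hbw]
    have hMwb : M w b = d := by rw [hMentry, SimpleGraph.dist_comm]; simp [hbw]
    have hMab : M a b = 0 := by rw [hMentry]; simp [hab]; omega
    have hMba : M b a = 0 := by rw [hMentry, SimpleGraph.dist_comm]; simp [hab]; omega
    have hMbc : M b c = 0 := by rw [hMentry]; simp [hbc]; omega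
    have hMcb : M c b = 0 := by rw [hMentry, SimpleGraph.dist_comm]; simp [hbc]; omega
    have hMsymm : ∀ u v, M u v = M v u := by
      intro u v; rw [hMentry, hMentry, SimpleGraph.dist_comm]
    have hdpos : (0:ℝ) < d := by
      have : (2:ℝ) ≤ d := by exact_mod_cast hd
      linarith
    -- apply the eigenvalue-count lemma
    apply two_le_posEigCount_aux (eccMatrix_isHermitian G)
      ((Pi.single a 1 : V → ℝ) + Pi.single c 1)
      (Pi.single b 1 + (2⁻¹ : ℝ) • (Pi.single w 1 : V → ℝ))
    intro α β hαβ
    have hexp : (α • ((Pi.single a 1 : V → ℝ) + Pi.single c 1) +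
        β • (Pi.single b 1 + (2⁻¹ : ℝ) • (Pi.single w 1 : V → ℝ))) ⬝ᵥ
        (eccMatrix G) *ᵥ (α • ((Pi.single a 1 : V → ℝ) + Pi.single c 1) +
        β • (Pi.single b 1 + (2⁻¹ : ℝ) • (Pi.single w 1 : V → ℝ)))
        = α * β * M b a + α * β * M w a * (1 / 2) + α * β * M b c +
          α * β * M w c * (1 / 2) + α * β * M a b + α * β * M c b +
          α * β * M a w * (1 / 2) + α * β * M c w * (1 / 2) +
          α ^ 2 * M a a + α ^ 2 * M c a + α ^ 2 * M a c + α ^ 2 * M c c +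
          β ^ 2 * M b b + β ^ 2 * M w b * (1 / 2) + β ^ 2 * M b w * (1 / 2) +
          β ^ 2 * M w w * (1 / 4) := by
      rw [← hM]
      simp only [Matrix.mulVec_add, Matrix.mulVec_smul, dotProduct_add,
        add_dotProduct, smul_dotProduct, dotProduct_smul,
        Matrix.mulVec_single_one, single_dotProduct, Matrix.col_apply, smul_eq_mul, mul_one]
      ring
    rw [hexp, hMdiag, hMdiag, hMdiag, hMdiag, hMac, hMca, hMbw, hMwb, hMab, hMba,
      hMbc, hMcb, hMsymm w a, hMsymm w c]
    have haw1 : 0 ≤ M a w := hMnn a w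
    have haw2 : M a w ≤ d := hMle a w
    have hcw1 : 0 ≤ M c w := hMnn c w
    have hcw2 : M c w ≤ d := hMle c w
    rcases eq_or_ne α 0 with hα | hα
    · have hβ : β ≠ 0 := by tauto
      rw [hα]
      have : 0 < β ^ 2 := by positivity
      nlinarith
    · nlinarith [sq_nonneg (α + β), sq_nonneg α, sq_nonneg β, sq_nonneg (α - β),
        mul_pos hdpos (by positivity : (0:ℝ) < α ^ 2),
        mul_nonneg (mul_nonneg haw1 (sq_nonneg (α + β))) (le_of_lt hdpos)]
end

section
/- Let G be a connected simple graph on at least 2 vertices whose eccentricity matrix ε(G) has at most one positive eigenvalue. Then G has radius 1, i.e., G has a vertex adjacent to all other vertices. -/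
open Finset Polynomial

open Matrix in
lemma quadform_eq_sum_eigen {V : Type*} [Fintype V] [DecidableEq V]
    {A : Matrix V V ℝ} (hA : A.IsHermitian) (x : V → ℝ) :
    x ⬝ᵥ A *ᵥ x =
      ∑ i, hA.eigenvalues i * (((hA.eigenvectorUnitary : Matrix V V ℝ)ᵀ *ᵥ x) i)^2 := by
  set U : Matrix V V ℝ := (hA.eigenvectorUnitary : Matrix V V ℝ) with hU
  have hstar : star U = Uᵀ := by
    ext i j
    simp [Matrix.star_apply]
  have hD : (Matrix.diagonal (RCLike.ofReal ∘ hA.eigenvalues) : Matrix V V ℝ)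
      = Matrix.diagonal hA.eigenvalues := by
    simp [RCLike.ofReal_real_eq_id]
  conv_lhs => rw [hA.spectral_theorem]
  rw [Unitary.conjStarAlgAut_apply, ← hU, hstar, hD]
  set y : V → ℝ := Uᵀ *ᵥ x with hy
  rw [← Matrix.mulVec_mulVec, ← Matrix.mulVec_mulVec, Matrix.dotProduct_mulVec,
    ← Matrix.mulVec_transpose, ← hy]
  simp only [dotProduct, Matrix.mulVec_diagonal]
  exact Finset.sum_congr rfl fun i _ => by ring

open Matrix in
lemma two_le_posEigCount {V : Type*} [Fintype V] [DecidableEq V] {A : Matrix V V ℝ}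
    (hA : A.IsHermitian) (hnn : ∀ i j, 0 ≤ A i j) (hdiag : ∀ i, A i i = 0)
    {u v z t : V} (ha : 0 < A u v) (hr : 0 < A z t) (h1 : A z u = 0) (h2 : A z v = 0) :
    2 ≤ posEigCount hA := by
  have hsymm : ∀ i j, A i j = A j i := fun i j => ((hA.apply i j).symm.trans (star_trivial _))
  set a := A u v with hav
  set r := A z t with hrv
  set C := A u t + A v t with hC
  have hC0 : 0 ≤ C := add_nonneg (hnn u t) (hnn v t)
  set t₀ : ℝ := 2*a*r/(C^2+1) with ht₀
  have hCs : (0:ℝ) < C^2 + 1 := by positivity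
  have ht₀pos : 0 < t₀ := by positivity
  have hdisc : t₀^2 * C^2 < 4*a*(t₀*r) := by
    have h3 : t₀ * C^2 < 2*a*r := by
      rw [ht₀, div_mul_eq_mul_div, div_lt_iff₀ hCs]
      nlinarith [mul_pos ha hr, sq_nonneg C]
    calc t₀^2*C^2 = t₀ * (t₀ * C^2) := by ring
    _ < t₀ * (2*a*r) := by exact (mul_lt_mul_iff_right₀ ht₀pos).2 h3
    _ < 4*a*(t₀*r) := by nlinarith [mul_pos ha hr]
  set w1 : V → ℝ := Pi.single u 1 + Pi.single v 1 with hw1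
  set w2 : V → ℝ := Pi.single z 1 + Pi.single t t₀ with hw2
  have hxq : ∀ α β : ℝ, (α • w1 + β • w2) ⬝ᵥ A *ᵥ (α • w1 + β • w2)
      = 2*a*α^2 + 2*t₀*r*β^2 + 2*t₀*C*(α*β) := by
    intro α β
    have e1 : A v u = a := (hsymm v u).trans rfl
    have e2 : A t z = r := hsymm t z
    have e3 : A t u = A u t := hsymm t u
    have e4 : A t v = A v t := hsymm t v
    have e5 : A u z = 0 := (hsymm u z).trans h1
    have e6 : A v z = 0 := (hsymm v z).trans h2
    simp only [hw1, hw2, Matrix.mulVec_add, Matrix.mulVec_smul, Matrix.mulVec_single,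
      dotProduct_add, add_dotProduct, smul_dotProduct,
      dotProduct_smul, single_dotProduct, smul_eq_mul, Pi.add_apply,
      Pi.smul_apply, Matrix.col_apply, MulOpposite.smul_eq_mul_unop, MulOpposite.unop_op, mul_one]
    rw [hdiag u, hdiag v, hdiag z, hdiag t, e1, e2, e3, e4, e5, e6, h1, h2]
    ring
  have hformpos : ∀ α β : ℝ, (α ≠ 0 ∨ β ≠ 0) →
      0 < 2*a*α^2 + 2*t₀*r*β^2 + 2*t₀*C*(α*β) := by
    intro α β hab
    rcases eq_or_ne β 0 with hb | hb
    · subst hb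
      have hα : α ≠ 0 := hab.resolve_right (by simp)
      have : 0 < α^2 := by positivity
      nlinarith
    · have hb2 : 0 < β^2 := by positivity
      nlinarith [sq_nonneg (2*a*α + t₀*C*β), mul_pos ha hr, sq_nonneg α,
        mul_pos ht₀pos hr, mul_pos (mul_pos ha ht₀pos) hr]
  by_contra hlt
  push_neg at hlt
  interval_cases h : posEigCount hA
  · have hall : ∀ i, hA.eigenvalues i ≤ 0 := by
      intro i
      by_contra hi
      push_neg at hi
      have hmem : i ∈ Finset.univ.filter fun i => 0 < hA.eigenvalues i := by simp [hi]
      rw [Finset.card_eq_zero.mp h] at hmem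
      exact absurd hmem (Finset.notMem_empty i)
    have hle : ((1:ℝ) • w1 + (0:ℝ) • w2) ⬝ᵥ A *ᵥ ((1:ℝ) • w1 + (0:ℝ) • w2) ≤ 0 := by
      rw [quadform_eq_sum_eigen hA]
      exact Finset.sum_nonpos fun i _ => mul_nonpos_of_nonpos_of_nonneg (hall i) (sq_nonneg _)
    rw [hxq 1 0] at hle
    have := hformpos 1 0 (Or.inl one_ne_zero)
    linarith
  · obtain ⟨j, hj⟩ := Finset.card_eq_one.mp h
    have hoth : ∀ i, i ≠ j → hA.eigenvalues i ≤ 0 := by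
      intro i hij
      by_contra hi
      push_neg at hi
      have hmem : i ∈ Finset.univ.filter fun i => 0 < hA.eigenvalues i := by simp [hi]
      rw [hj] at hmem
      exact hij (Finset.mem_singleton.mp hmem)
    set Ut := (hA.eigenvectorUnitary : Matrix V V ℝ)ᵀ with hUt
    set p := (Ut *ᵥ w1) j with hp
    set q := (Ut *ᵥ w2) j with hq
    obtain ⟨α, β, hab, hker⟩ : ∃ α β : ℝ, (α ≠ 0 ∨ β ≠ 0) ∧ α * p + β * q = 0 := by
      rcases eq_or_ne q 0 with hq0 | hq0
      · exact ⟨0, 1, Or.inr one_ne_zero, by simp [hq0]⟩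
      · exact ⟨q, -p, Or.inl hq0, by ring⟩
    set x : V → ℝ := α • w1 + β • w2 with hx
    have hyj : (Ut *ᵥ x) j = 0 := by
      rw [hx, Matrix.mulVec_add, Matrix.mulVec_smul, Matrix.mulVec_smul]
      simpa [← hp, ← hq, smul_eq_mul] using hker
    have hle : x ⬝ᵥ A *ᵥ x ≤ 0 := by
      rw [quadform_eq_sum_eigen hA]
      refine Finset.sum_nonpos fun i _ => ?_
      rcases eq_or_ne i j with rfl | hij
      · rw [← hUt, hyj]
        simp
      · exact mul_nonpos_of_nonpos_of_nonneg (hoth i hij) (sq_nonneg _)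
    rw [hx, hxq α β] at hle
    have := hformpos α β hab
    linarith

lemma dist_le_ecc {V : Type*} [Fintype V] (G : SimpleGraph V) (u v : V) :
    G.dist u v ≤ ecc G u :=
  Finset.le_sup (Finset.mem_univ v)

lemma exists_partner {V : Type*} [Fintype V] [Nonempty V] (G : SimpleGraph V) (u : V) :
    ∃ t, G.dist u t = ecc G u := by
  obtain ⟨t, _, ht⟩ := Finset.exists_mem_eq_sup Finset.univ Finset.univ_nonempty (G.dist u)
  exact ⟨t, ht.symm⟩

lemma eccMatrix_nonneg {V : Type*} [Fintype V] (G : SimpleGraph V) (u v : V) :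
    0 ≤ eccMatrix G u v := by
  unfold eccMatrix
  split <;> positivity

lemma eccMatrix_diag {V : Type*} [Fintype V] (G : SimpleGraph V) (u : V) :
    eccMatrix G u u = 0 := by
  unfold eccMatrix
  split <;> simp

lemma eccMatrix_partner {V : Type*} [Fintype V] {G : SimpleGraph V} {u t : V}
    (h : G.dist u t = ecc G u) : eccMatrix G u t = (ecc G u : ℝ) := by
  have h1 : ecc G u ≤ ecc G t := by
    rw [← h, SimpleGraph.dist_comm]
    exact dist_le_ecc G t u
  unfold eccMatrix
  rw [if_pos, h]
  rw [h, min_eq_left h1]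

lemma key_config {V : Type*} [Fintype V] [Nonempty V] {G : SimpleGraph V}
    (hconn : G.Connected) (hecc : ∀ w, 2 ≤ ecc G w) :
    ∀ k (u v : V), G.dist u v = ecc G u → ecc G u = k →
    ∃ a b c d : V, 0 < eccMatrix G a b ∧ 0 < eccMatrix G c d ∧
      eccMatrix G c a = 0 ∧ eccMatrix G c b = 0 := by
  intro k
  induction k using Nat.strong_induction_on with
  | _ k IH =>
    intro u v hdist heq
    have hk2 : 2 ≤ k := heq ▸ hecc u
    have hne0 : G.dist u v ≠ 0 := by omega
    obtain ⟨p, hp⟩ := SimpleGraph.exists_walk_of_dist_ne_zero hne0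
    cases p with
    | nil => simp at hne0
    | @cons _ z _ hadj q =>
      rw [SimpleGraph.Walk.length_cons, hdist, heq] at hp
      have hqle : G.dist z v ≤ q.length := SimpleGraph.dist_le q
      have h1le : G.dist u z = 1 := SimpleGraph.dist_eq_one_iff_adj.mpr hadj
      have tri : G.dist u v ≤ G.dist u z + G.dist z v := hconn.dist_triangle
      have hzz : G.dist z v = k - 1 := by omega
      have hzu0 : eccMatrix G z u = 0 := by
        have h1 : G.dist z u = 1 := by rwa [SimpleGraph.dist_comm]
        have hne : G.dist z u ≠ min (ecc G z) (ecc G u) := by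
          have := hecc z; have := hecc u; omega
        unfold eccMatrix
        rw [if_neg hne]
      have hvu : ecc G u ≤ ecc G v := by
        have h2 : G.dist v u ≤ ecc G v := dist_le_ecc G v u
        rwa [SimpleGraph.dist_comm, hdist] at h2
      by_cases hB : G.dist z v = min (ecc G z) (ecc G v)
      · have hez : ecc G z = k - 1 := by
          have h2z := hecc z
          rw [heq] at hvu
          omega
        obtain ⟨t, ht⟩ := exists_partner G z
        exact IH (k-1) (by omega) z t ht hez
      · obtain ⟨t, ht⟩ := exists_partner G z
        refine ⟨u, v, z, t, ?_, ?_, hzu0, ?_⟩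
        · have h3 : eccMatrix G u v = (ecc G u : ℝ) := eccMatrix_partner hdist
          rw [h3]
          have := hecc u
          positivity
        · rw [eccMatrix_partner ht]
          have := hecc z
          positivity
        · unfold eccMatrix
          rw [if_neg hB]

/-- a connected graph on at least two vertices whose eccentricity matrix has
at most one positive eigenvalue has radius 1, i.e. it has a vertex adjacent to all others. -/
theorem stmt3 {V : Type*} [Fintype V] [DecidableEq V] (G : SimpleGraph V)
    (hconn : G.Connected) (hcard : 2 ≤ Fintype.card V)
    (hpos : posEigCount (eccMatrix_isHermitian G) ≤ 1) :
    ∃ v : V, ∀ u : V, u ≠ v → G.Adj v u := by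
  by_contra hcon
  push_neg at hcon
  have hne' : Nonempty V := Fintype.card_pos_iff.mp (by omega)
  haveI := hne'
  have hecc : ∀ w, 2 ≤ ecc G w := by
    intro w
    obtain ⟨u, hne, hnadj⟩ := hcon w
    have h0 : G.dist w u ≠ 0 := by
      rw [Ne, hconn.dist_eq_zero_iff]
      exact fun h => hne h.symm
    have h1 : G.dist w u ≠ 1 := fun h => hnadj (SimpleGraph.dist_eq_one_iff_adj.mp h)
    have := dist_le_ecc G w u
    omega
  obtain ⟨u⟩ := hne'
  obtain ⟨v, hv⟩ := exists_partner G u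
  obtain ⟨a, b, c, d, h1, h2, h3, h4⟩ := key_config hconn hecc (ecc G u) u v hv rfl
  have := two_le_posEigCount (eccMatrix_isHermitian G) (eccMatrix_nonneg G)
    (eccMatrix_diag G) h1 h2 h3 h4
  omega
end

section
/- Let G be a connected simple graph with diam(G) ≥ 3, and let G + u denote the join of G with a single new vertex u (u is adjacent to every vertex of G). Then the eccentricity matrix ε(G + u) has at least two positive eigenvalues. -/
open Finset Polynomial

open Matrix

section SpectralAux

set_option linter.unusedSectionVars false

variable {n : Type*} [Fintype n] [DecidableEq n]

lemma dot_sum_aux (x : n → ℝ) (f : n → (n → ℝ)) :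
    x ⬝ᵥ (∑ i, f i) = ∑ i, x ⬝ᵥ f i := by
  simp only [dotProduct, Finset.sum_apply, Finset.mul_sum]
  exact Finset.sum_comm

lemma quadForm_eq_sum {A : Matrix n n ℝ}
    (hA : A.IsHermitian) (x : n → ℝ) :
    x ⬝ᵥ (A *ᵥ x) = ∑ i, hA.eigenvalues i * (hA.eigenvectorBasis.repr (WithLp.toLp 2 x) i)^2 := by
  set B := hA.eigenvectorBasis with hB
  have h1 : A *ᵥ x = ∑ i, B.repr (WithLp.toLp 2 x) i • (hA.eigenvalues i • ((B i : EuclideanSpace ℝ n) : n → ℝ)) := by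
    have hx : x = ∑ i, B.repr (WithLp.toLp 2 x) i • (B i : n → ℝ) := by
      have := congrArg WithLp.ofLp (B.sum_repr (WithLp.toLp 2 x)); simpa using this.symm
    conv_lhs => rw [hx]
    rw [← Matrix.mulVecLin_apply, map_sum]
    refine Finset.sum_congr rfl fun i _ => ?_
    rw [_root_.map_smul, Matrix.mulVecLin_apply]
    exact congrArg _ (hA.mulVec_eigenvectorBasis i)
  have h2 : ∀ i, x ⬝ᵥ (B i : n → ℝ) = B.repr (WithLp.toLp 2 x) i := by
    intro i
    rw [B.repr_apply_apply]
    simp [PiLp.inner_apply, dotProduct, mul_comm]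
  rw [h1, dot_sum_aux x fun i => (B.repr (WithLp.toLp 2 x) i • (hA.eigenvalues i • (B i : EuclideanSpace ℝ n)) : n → ℝ)]
  refine Finset.sum_congr rfl fun i _ => ?_
  rw [dotProduct_smul, dotProduct_smul, h2]
  simp [smul_eq_mul]; ring

lemma two_le_pos {A : Matrix n n ℝ}
    (hA : A.IsHermitian) (v₁ v₂ : n → ℝ)
    (h1 : 0 < v₁ ⬝ᵥ (A *ᵥ v₁)) (h2 : 0 < v₂ ⬝ᵥ (A *ᵥ v₂))
    (h12 : v₁ ⬝ᵥ (A *ᵥ v₂) = 0) (h21 : v₂ ⬝ᵥ (A *ᵥ v₁) = 0) :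
    2 ≤ (Finset.univ.filter fun i => 0 < hA.eigenvalues i).card := by
  by_contra hlt
  push_neg at hlt
  have hlt' : (Finset.univ.filter fun i => 0 < hA.eigenvalues i).card ≤ 1 := by omega
  set B := hA.eigenvectorBasis with hB
  have hneg : ∀ w : n → ℝ, (∀ i, 0 < hA.eigenvalues i → B.repr (WithLp.toLp 2 w) i = 0) →
      w ⬝ᵥ (A *ᵥ w) ≤ 0 := by
    intro w hw
    rw [quadForm_eq_sum hA w]
    apply Finset.sum_nonpos
    intro i _
    by_cases hi : 0 < hA.eigenvalues i
    · rw [hw i hi]; simp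
    · push_neg at hi
      exact mul_nonpos_of_nonpos_of_nonneg hi (sq_nonneg _)
  have hne : Nonempty n := by
    by_contra h
    rw [not_nonempty_iff] at h
    simp [dotProduct] at h1
  obtain ⟨i₀, hi₀⟩ := Finset.card_le_one_iff_subset_singleton.mp hlt'
  have hkey : ∀ i, 0 < hA.eigenvalues i → i = i₀ := by
    intro i hi
    have := hi₀ (Finset.mem_filter.mpr ⟨Finset.mem_univ i, hi⟩)
    simpa using this
  set c₁ := B.repr (WithLp.toLp 2 v₁) i₀ with hc₁
  set c₂ := B.repr (WithLp.toLp 2 v₂) i₀ with hc₂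
  by_cases hc : c₁ = 0
  · have := hneg v₁ (fun i hi => by rw [hkey i hi, ← hc₁]; exact hc)
    linarith
  · set w : n → ℝ := c₂ • v₁ - c₁ • v₂ with hw
    have hrepr : B.repr (WithLp.toLp 2 w) = c₂ • B.repr (WithLp.toLp 2 v₁) - c₁ • B.repr (WithLp.toLp 2 v₂) := by
      rw [hw]
      exact_mod_cast by
        rw [show WithLp.toLp 2 (c₂ • v₁ - c₁ • v₂ : n → ℝ)
            = (c₂ • WithLp.toLp 2 v₁ - c₁ • WithLp.toLp 2 v₂ : EuclideanSpace ℝ n) from rfl,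
          map_sub, _root_.map_smul, _root_.map_smul]
    have hwrepr : ∀ i, 0 < hA.eigenvalues i → B.repr (WithLp.toLp 2 w) i = 0 := by
      intro i hi
      rw [hkey i hi, hrepr]
      show c₂ • B.repr (WithLp.toLp 2 v₁) i₀ - c₁ • B.repr (WithLp.toLp 2 v₂) i₀ = 0
      rw [← hc₁, ← hc₂]
      ring_nf
    have hq : w ⬝ᵥ (A *ᵥ w) = c₂^2 * (v₁ ⬝ᵥ (A *ᵥ v₁)) + c₁^2 * (v₂ ⬝ᵥ (A *ᵥ v₂)) := by
      rw [hw]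
      simp only [Matrix.mulVec_sub, Matrix.mulVec_smul, sub_dotProduct,
        smul_dotProduct, dotProduct_sub, dotProduct_smul,
        smul_eq_mul, h12, h21]
      ring
    have hle := hneg w hwrepr
    have hpos : 0 < w ⬝ᵥ (A *ᵥ w) := by
      rw [hq]
      have : 0 < c₁^2 := by positivity
      nlinarith [sq_nonneg c₂]
    linarith

lemma dot_mulVec_comm {A : Matrix n n ℝ} (hA : A.IsHermitian) (v w : n → ℝ) :
    v ⬝ᵥ (A *ᵥ w) = w ⬝ᵥ (A *ᵥ v) := by
  have hAe : ∀ i j, A i j = A j i := by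
    intro i j
    conv_lhs => rw [← hA]
    simp [Matrix.conjTranspose_apply]
  calc v ⬝ᵥ (A *ᵥ w) = ∑ i, ∑ j, v i * (A i j * w j) := by
        simp [dotProduct, Matrix.mulVec, Finset.mul_sum]
    _ = ∑ j, ∑ i, v i * (A i j * w j) := Finset.sum_comm
    _ = w ⬝ᵥ (A *ᵥ v) := by
        simp only [dotProduct, Matrix.mulVec, Finset.mul_sum]
        refine Finset.sum_congr rfl fun j _ => Finset.sum_congr rfl fun i _ => ?_
        rw [hAe i j]; ring

lemma single_dot_mulVec (A : Matrix n n ℝ) (i j : n) :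
    (Pi.single i 1 : n → ℝ) ⬝ᵥ (A *ᵥ Pi.single j 1) = A i j := by
  simp [Matrix.mulVec_single, single_dotProduct]

end SpectralAux

section PathAux

lemma exists_path4 {V : Type*} (G : SimpleGraph V) (hconn : G.Connected) {x y : V}
    (h3 : 3 ≤ G.dist x y) :
    ∃ a b c : V, G.Adj x a ∧ G.Adj a b ∧ G.Adj b c ∧
      2 ≤ G.dist x b ∧ 3 ≤ G.dist x c ∧ 2 ≤ G.dist a c := by
  obtain ⟨p, hp⟩ := (hconn x y).exists_walk_length_eq_dist
  rw [← hp] at h3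
  cases p with
  | nil => simp at h3
  | cons h₁ p₁ =>
    rename_i a
    cases p₁ with
    | nil => simp at h3
    | cons h₂ p₂ =>
      rename_i b
      cases p₂ with
      | nil => simp at h3
      | cons h₃ p₃ =>
        rename_i c
        refine ⟨a, b, c, h₁, h₂, h₃, ?_, ?_, ?_⟩
        · have t1 := hconn.dist_triangle (u := x) (v := b) (w := y)
          have t2 := SimpleGraph.dist_le (SimpleGraph.Walk.cons h₃ p₃)
          simp only [SimpleGraph.Walk.length_cons] at hp t2
          omega
        · have t1 := hconn.dist_triangle (u := x) (v := c) (w := y)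
          have t2 := SimpleGraph.dist_le p₃
          simp only [SimpleGraph.Walk.length_cons] at hp
          omega
        · have t1 := hconn.dist_triangle (u := x) (v := c) (w := y)
          have t2 := SimpleGraph.dist_le p₃
          have t3 := hconn.dist_triangle (u := x) (v := a) (w := c)
          have t4 := SimpleGraph.dist_le (SimpleGraph.Walk.cons h₁ SimpleGraph.Walk.nil)
          simp only [SimpleGraph.Walk.length_cons, SimpleGraph.Walk.length_nil] at hp t4
          omega

lemma two_le_dist_facts {V : Type*} (G : SimpleGraph V) {v w : V} (h : 2 ≤ G.dist v w) :
    v ≠ w ∧ ¬ G.Adj v w := by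
  constructor
  · rintro rfl; simp [SimpleGraph.dist_self] at h
  · intro hadj
    rw [← SimpleGraph.dist_eq_one_iff_adj] at hadj
    omega

end PathAux

section Hfacts

set_option linter.unusedSectionVars false

variable {V : Type*} [Fintype V] [DecidableEq V] (G : SimpleGraph V)

local notation "H" => graphJoin G (⊤ : SimpleGraph Unit)

lemma adj_inl_inr (v : V) : (H).Adj (Sum.inl v) (Sum.inr ()) := trivial

lemma H_conn : (H).Connected := by
  rw [SimpleGraph.connected_iff]
  refine ⟨?_, ⟨Sum.inr ()⟩⟩
  have hz : ∀ z : V ⊕ Unit, (H).Reachable z (Sum.inr ()) := by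
    rintro (v | ⟨⟩)
    · exact (adj_inl_inr G v).reachable
    · exact SimpleGraph.Reachable.refl _
  intro z w
  exact (hz z).trans (hz w).symm

lemma H_dist_le_two (z w : V ⊕ Unit) : (H).dist z w ≤ 2 := by
  by_cases hzw : z = w
  · subst hzw; simp [SimpleGraph.dist_self]
  by_cases hadj : (H).Adj z w
  · rw [SimpleGraph.dist_eq_one_iff_adj.mpr hadj]; omega
  rcases z with v | ⟨⟩
  · rcases w with w' | ⟨⟩
    · have := SimpleGraph.dist_le (SimpleGraph.Walk.cons (adj_inl_inr G v)
          (SimpleGraph.Walk.cons ((adj_inl_inr G w').symm) SimpleGraph.Walk.nil))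
      simpa using this
    · exact absurd (adj_inl_inr G v) hadj
  · rcases w with w' | ⟨⟩
    · exact absurd ((adj_inl_inr G w').symm) hadj
    · exact absurd rfl hzw

lemma H_dist_two {v w : V} (hne : v ≠ w) (hadj : ¬ G.Adj v w) :
    (H).dist (Sum.inl v) (Sum.inl w) = 2 := by
  have hle := H_dist_le_two G (Sum.inl v) (Sum.inl w)
  have h0 : 0 < (H).dist (Sum.inl v) (Sum.inl w) :=
    ((H_conn G).preconnected _ _).pos_dist_of_ne (by simpa using hne)
  have h1 : (H).dist (Sum.inl v) (Sum.inl w) ≠ 1 := by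
    rw [ne_eq, SimpleGraph.dist_eq_one_iff_adj]
    exact hadj
  omega

lemma H_ecc_le (z : V ⊕ Unit) : ecc (H) z ≤ 2 :=
  Finset.sup_le fun w _ => H_dist_le_two G z w

lemma H_ecc_two {v w : V} (hne : v ≠ w) (hadj : ¬ G.Adj v w) :
    ecc (H) (Sum.inl v) = 2 := by
  refine le_antisymm (H_ecc_le G _) ?_
  rw [← H_dist_two G hne hadj]
  exact Finset.le_sup (Finset.mem_univ (Sum.inl w))

lemma H_entry_two {v w : V} (hv : ecc (H) (Sum.inl v) = 2) (hw : ecc (H) (Sum.inl w) = 2)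
    (hne : v ≠ w) (hadj : ¬ G.Adj v w) :
    eccMatrix (H) (Sum.inl v) (Sum.inl w) = 2 := by
  simp only [eccMatrix, hv, hw, H_dist_two G hne hadj]
  norm_num

lemma H_entry_adj {v w : V} (hv : ecc (H) (Sum.inl v) = 2) (hw : ecc (H) (Sum.inl w) = 2)
    (hadj : G.Adj v w) :
    eccMatrix (H) (Sum.inl v) (Sum.inl w) = 0 := by
  have h1 : (H).dist (Sum.inl v) (Sum.inl w) = 1 :=
    SimpleGraph.dist_eq_one_iff_adj.mpr hadj
  simp only [eccMatrix, hv, hw, h1]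
  norm_num

lemma H_entry_diag {v : V} (hv : ecc (H) (Sum.inl v) = 2) :
    eccMatrix (H) (Sum.inl v) (Sum.inl v) = 0 := by
  simp only [eccMatrix, hv, SimpleGraph.dist_self]
  norm_num

end Hfacts

/-- if `G` is connected with diameter at least 3, then the join of `G`
with one new vertex has at least two positive eccentricity eigenvalues. -/
theorem stmt5 {V : Type*} [Fintype V] [DecidableEq V] (G : SimpleGraph V)
    (hconn : G.Connected) (hdiam : 3 ≤ Finset.univ.sup (ecc G)) :
    2 ≤ posEigCount (eccMatrix_isHermitian (graphJoin G (⊤ : SimpleGraph Unit))) := by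
  obtain ⟨x, -, hx⟩ := (Finset.le_sup_iff (by norm_num : (0:ℕ) < 3)).mp hdiam
  rw [ecc] at hx
  obtain ⟨y, -, hy⟩ := (Finset.le_sup_iff (by norm_num : (0:ℕ) < 3)).mp hx
  obtain ⟨a, b, c, hxa, hab, hbc, hdxb, hdxc, hdac⟩ := exists_path4 G hconn hy
  obtain ⟨hxb_ne, hxb_nadj⟩ := two_le_dist_facts G hdxb
  obtain ⟨hxc_ne, hxc_nadj⟩ := two_le_dist_facts G (v := x) (w := c) (by omega)
  obtain ⟨hac_ne, hac_nadj⟩ := two_le_dist_facts G hdac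
  -- eccentricities in the join
  have hex : ecc (graphJoin G (⊤ : SimpleGraph Unit)) (Sum.inl x) = 2 :=
    H_ecc_two G hxc_ne hxc_nadj
  have hea : ecc (graphJoin G (⊤ : SimpleGraph Unit)) (Sum.inl a) = 2 :=
    H_ecc_two G hac_ne hac_nadj
  have heb : ecc (graphJoin G (⊤ : SimpleGraph Unit)) (Sum.inl b) = 2 :=
    H_ecc_two G (Ne.symm hxb_ne) (fun h => hxb_nadj h.symm)
  have hec : ecc (graphJoin G (⊤ : SimpleGraph Unit)) (Sum.inl c) = 2 :=
    H_ecc_two G (Ne.symm hxc_ne) (fun h => hxc_nadj h.symm)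
  -- matrix entries
  have eXA := H_entry_adj G hex hea hxa
  have eAX := H_entry_adj G hea hex hxa.symm
  have eAB := H_entry_adj G hea heb hab
  have eBA := H_entry_adj G heb hea hab.symm
  have eBC := H_entry_adj G heb hec hbc
  have eCB := H_entry_adj G hec heb hbc.symm
  have eXB := H_entry_two G hex heb hxb_ne hxb_nadj
  have eBX := H_entry_two G heb hex (Ne.symm hxb_ne) (fun h => hxb_nadj h.symm)
  have eXC := H_entry_two G hex hec hxc_ne hxc_nadj
  have eCX := H_entry_two G hec hex (Ne.symm hxc_ne) (fun h => hxc_nadj h.symm)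
  have eAC := H_entry_two G hea hec hac_ne hac_nadj
  have eCA := H_entry_two G hec hea (Ne.symm hac_ne) (fun h => hac_nadj h.symm)
  have eXX := H_entry_diag G hex
  have eAA := H_entry_diag G hea
  have eBB := H_entry_diag G heb
  have eCC := H_entry_diag G hec
  set A := eccMatrix (graphJoin G (⊤ : SimpleGraph Unit)) with hAdef
  set v₁ : (V ⊕ Unit) → ℝ :=
    Pi.single (Sum.inl x) 1 + Pi.single (Sum.inl c) 1 with hv₁
  set v₂ : (V ⊕ Unit) → ℝ :=
    Pi.single (Sum.inl x) 1 - Pi.single (Sum.inl c) 1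
      - Pi.single (Sum.inl a) 1 + Pi.single (Sum.inl b) 1 with hv₂
  have h1 : 0 < v₁ ⬝ᵥ (A *ᵥ v₁) := by
    rw [hv₁]
    simp only [Matrix.mulVec_add, Matrix.mulVec_sub, dotProduct_add,
      dotProduct_sub, add_dotProduct, sub_dotProduct,
      single_dot_mulVec, eXA, eAX, eAB, eBA, eBC, eCB, eXB, eBX, eXC, eCX,
      eAC, eCA, eXX, eAA, eBB, eCC]
    norm_num
  have h2 : 0 < v₂ ⬝ᵥ (A *ᵥ v₂) := by
    rw [hv₂]
    simp only [Matrix.mulVec_add, Matrix.mulVec_sub, dotProduct_add,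
      dotProduct_sub, add_dotProduct, sub_dotProduct,
      single_dot_mulVec, eXA, eAX, eAB, eBA, eBC, eCB, eXB, eBX, eXC, eCX,
      eAC, eCA, eXX, eAA, eBB, eCC]
    norm_num
  have h12 : v₁ ⬝ᵥ (A *ᵥ v₂) = 0 := by
    rw [hv₁, hv₂]
    simp only [Matrix.mulVec_add, Matrix.mulVec_sub, dotProduct_add,
      dotProduct_sub, add_dotProduct, sub_dotProduct,
      single_dot_mulVec, eXA, eAX, eAB, eBA, eBC, eCB, eXB, eBX, eXC, eCX,
      eAC, eCA, eXX, eAA, eBB, eCC]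
    norm_num
  have h21 : v₂ ⬝ᵥ (A *ᵥ v₁) = 0 := by
    rw [dot_mulVec_comm (eccMatrix_isHermitian _) v₂ v₁]
    exact h12
  unfold posEigCount
  exact two_le_pos (eccMatrix_isHermitian _) v₁ v₂ h1 h2 h12 h21
end

section
/- Let r₁, r₂ ≥ 2 and let K_{r₁,r₂} be the complete bipartite graph with parts of sizes r₁ and r₂. Then the eccentricity matrix ε(K_{r₁,r₂}) has exactly two positive eigenvalues (namely 2(r₁−1) and 2(r₂−1)), so K_{r₁,r₂} does not have exactly one positive ε-eigenvalue. -/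
open Finset Polynomial

open Matrix

/-! ### Auxiliary results for `stmt6` -/

lemma kb_conj_helper {n : Type*} [Fintype n] [DecidableEq n] (U D : Matrix n n ℝ)
    (hU : star U * U = 1) : (U * D * star U * (U * D * star U)).trace = (D * D).trace := by
  have h1 : U * D * star U * (U * D * star U) = U * (D * D) * star U := by
    simp only [Matrix.mul_assoc]
    rw [← Matrix.mul_assoc (star U) U (D * star U), hU, Matrix.one_mul]
  rw [h1, Matrix.trace_mul_comm, ← Matrix.mul_assoc, hU, Matrix.one_mul]

lemma kb_trace_eq_sum_eig {n : Type*} [Fintype n] [DecidableEq n] {A : Matrix n n ℝ}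
    (hA : A.IsHermitian) : A.trace = ∑ i, hA.eigenvalues i := by
  conv_lhs => rw [hA.spectral_theorem, Unitary.conjStarAlgAut_apply]
  rw [Matrix.trace_mul_comm, ← Matrix.mul_assoc, Unitary.coe_star_mul_self, Matrix.one_mul,
    Matrix.trace_diagonal]
  simp

lemma kb_trace_sq_eq_sum_eig_sq {n : Type*} [Fintype n] [DecidableEq n] {A : Matrix n n ℝ}
    (hA : A.IsHermitian) : (A * A).trace = ∑ i, hA.eigenvalues i ^ 2 := by
  conv_lhs => rw [hA.spectral_theorem, Unitary.conjStarAlgAut_apply]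
  rw [kb_conj_helper _ _ (Unitary.coe_star_mul_self _), Matrix.diagonal_mul_diagonal,
    Matrix.trace_diagonal]
  simp [sq]


lemma kb_count {n : Type*} [Fintype n] (f : n → ℝ) (A B : ℝ) (hA : 2 < A) (hB : 2 < B)
    (htri : ∀ i, f i + 2 = 0 ∨ f i + 2 = A ∨ f i + 2 = B)
    (hsum : ∑ i, (f i + 2) = A + B)
    (hsumsq : ∑ i, (f i + 2) ^ 2 = A ^ 2 + B ^ 2) :
    (Finset.univ.filter fun i => 0 < f i).card = 2
      ∧ (∃ i, f i + 2 = A) ∧ (∃ i, f i + 2 = B) := by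
  set k := (Finset.univ.filter fun i => 0 < f i).card with hkdef
  have hzero : ∑ i, ((f i + 2) ^ 2 - (A + B) * (f i + 2)
      + (A * B) * (if 0 < f i then 1 else 0)) = 0 := by
    apply Finset.sum_eq_zero
    intro i _
    rcases htri i with h | h | h
    · rw [if_neg (by nlinarith), h]; ring
    · rw [if_pos (by nlinarith), h]; ring
    · rw [if_pos (by nlinarith), h]; ring
  rw [Finset.sum_add_distrib, Finset.sum_sub_distrib, hsumsq, ← Finset.mul_sum, hsum,
    ← Finset.mul_sum, Finset.sum_boole, ← hkdef] at hzero
  have hk2 : (k : ℝ) = 2 := by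
    have hpos : (0:ℝ) < A * B := by nlinarith
    nlinarith [hzero]
  have hk : k = 2 := by exact_mod_cast hk2
  have hex : ∃ i, 0 < f i := by
    have hkpos : 0 < (Finset.univ.filter fun i => 0 < f i).card := by rw [← hkdef]; omega
    obtain ⟨i, hi⟩ := Finset.card_pos.mp hkpos
    exact ⟨i, (Finset.mem_filter.mp hi).2⟩
  have hex1 : ∃ i, f i + 2 = A := by
    by_contra hcon
    push_neg at hcon
    have hall : ∀ i, f i + 2 = B * (if 0 < f i then 1 else 0) := by
      intro i
      rcases htri i with h | h | h
      · rw [if_neg (by nlinarith), h]; ring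
      · exact absurd h (hcon i)
      · rw [if_pos (by nlinarith), h]; ring
    have hsum2 : A + B = B * k := by
      rw [← hsum, Finset.sum_congr rfl fun i _ => hall i, ← Finset.mul_sum,
        Finset.sum_boole, ← hkdef]
    rw [hk2] at hsum2
    have hAB : A = B := by linarith
    obtain ⟨i, hi⟩ := hex
    rcases htri i with h | h | h
    · nlinarith
    · exact hcon i h
    · exact hcon i (hAB ▸ h)
  have hex2 : ∃ i, f i + 2 = B := by
    by_contra hcon
    push_neg at hcon
    have hall : ∀ i, f i + 2 = A * (if 0 < f i then 1 else 0) := by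
      intro i
      rcases htri i with h | h | h
      · rw [if_neg (by nlinarith), h]; ring
      · rw [if_pos (by nlinarith), h]; ring
      · exact absurd h (hcon i)
    have hsum2 : A + B = A * k := by
      rw [← hsum, Finset.sum_congr rfl fun i _ => hall i, ← Finset.mul_sum,
        Finset.sum_boole, ← hkdef]
    rw [hk2] at hsum2
    have hAB : A = B := by linarith
    obtain ⟨i, hi⟩ := hex
    rcases htri i with h | h | h
    · nlinarith
    · exact hcon i (hAB ▸ h)
    · exact hcon i h
  exact ⟨hk, hex1, hex2⟩

section KB

variable (r₁ r₂ : ℕ)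

local notation "G" => completeBipartiteGraph (Fin r₁) (Fin r₂)
local notation "VV" => (Fin r₁ ⊕ Fin r₂)

lemma kb_dist_cross (a : Fin r₁) (b : Fin r₂) :
    (G).dist (Sum.inl a) (Sum.inr b) = 1 :=
  SimpleGraph.dist_eq_one_iff_adj.mpr (by simp)

lemma kb_dist_cross' (b : Fin r₂) (a : Fin r₁) :
    (G).dist (Sum.inr b) (Sum.inl a) = 1 :=
  SimpleGraph.dist_eq_one_iff_adj.mpr (by simp)

lemma kb_dist_left (h2 : 2 ≤ r₂) (a b : Fin r₁) (hab : a ≠ b) :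
    (G).dist (Sum.inl a) (Sum.inl b) = 2 := by
  let c : Fin r₂ := ⟨0, by omega⟩
  let w : (G).Walk (Sum.inl a) (Sum.inl b) :=
    SimpleGraph.Walk.cons (v := Sum.inr c) (by simp)
      (SimpleGraph.Walk.cons (by simp) SimpleGraph.Walk.nil)
  have hle : (G).dist (Sum.inl a) (Sum.inl b) ≤ 2 := SimpleGraph.dist_le w
  have hne0 : (G).dist (Sum.inl a) (Sum.inl b) ≠ 0 := by
    rw [ne_eq, SimpleGraph.dist_eq_zero_iff_eq_or_not_reachable]
    push_neg
    exact ⟨by simp [hab], ⟨w⟩⟩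
  have hne1 : (G).dist (Sum.inl a) (Sum.inl b) ≠ 1 := by
    rw [ne_eq, SimpleGraph.dist_eq_one_iff_adj]
    simp
  omega

lemma kb_dist_right (h1 : 2 ≤ r₁) (a b : Fin r₂) (hab : a ≠ b) :
    (G).dist (Sum.inr a) (Sum.inr b) = 2 := by
  let c : Fin r₁ := ⟨0, by omega⟩
  let w : (G).Walk (Sum.inr a) (Sum.inr b) :=
    SimpleGraph.Walk.cons (v := Sum.inl c) (by simp)
      (SimpleGraph.Walk.cons (by simp) SimpleGraph.Walk.nil)
  have hle : (G).dist (Sum.inr a) (Sum.inr b) ≤ 2 := SimpleGraph.dist_le w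
  have hne0 : (G).dist (Sum.inr a) (Sum.inr b) ≠ 0 := by
    rw [ne_eq, SimpleGraph.dist_eq_zero_iff_eq_or_not_reachable]
    push_neg
    exact ⟨by simp [hab], ⟨w⟩⟩
  have hne1 : (G).dist (Sum.inr a) (Sum.inr b) ≠ 1 := by
    rw [ne_eq, SimpleGraph.dist_eq_one_iff_adj]
    simp
  omega

lemma kb_dist_le (h1 : 2 ≤ r₁) (h2 : 2 ≤ r₂) (u v : VV) :
    (G).dist u v ≤ 2 := by
  rcases u with a | a <;> rcases v with b | b
  · rcases eq_or_ne a b with rfl | h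
    · simp [SimpleGraph.dist_self]
    · exact (kb_dist_left r₁ r₂ h2 a b h).le
  · simp [kb_dist_cross]
  · simp [kb_dist_cross']
  · rcases eq_or_ne a b with rfl | h
    · simp [SimpleGraph.dist_self]
    · exact (kb_dist_right r₁ r₂ h1 a b h).le

lemma kb_ecc (h1 : 2 ≤ r₁) (h2 : 2 ≤ r₂) (u : VV) : ecc (G) u = 2 := by
  have hle : ecc (G) u ≤ 2 := Finset.sup_le fun v _ => kb_dist_le r₁ r₂ h1 h2 u v
  have hge : 2 ≤ ecc (G) u := by
    rcases u with a | a
    · have : Nontrivial (Fin r₁) := Fin.nontrivial_iff_two_le.mpr h1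
      obtain ⟨b, hb⟩ := exists_ne a
      calc 2 = (G).dist (Sum.inl a) (Sum.inl b) := (kb_dist_left r₁ r₂ h2 a b (Ne.symm hb)).symm
        _ ≤ _ := Finset.le_sup (Finset.mem_univ _)
    · have : Nontrivial (Fin r₂) := Fin.nontrivial_iff_two_le.mpr h2
      obtain ⟨b, hb⟩ := exists_ne a
      calc 2 = (G).dist (Sum.inr a) (Sum.inr b) := (kb_dist_right r₁ r₂ h1 a b (Ne.symm hb)).symm
        _ ≤ _ := Finset.le_sup (Finset.mem_univ _)
  omega

lemma kb_eccMatrix (h1 : 2 ≤ r₁) (h2 : 2 ≤ r₂) (u v : VV) :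
    eccMatrix (G) u v = if u.isLeft = v.isLeft ∧ u ≠ v then 2 else 0 := by
  rw [eccMatrix, kb_ecc r₁ r₂ h1 h2, kb_ecc r₁ r₂ h1 h2, min_self]
  rcases u with a | a <;> rcases v with b | b
  · rcases eq_or_ne a b with rfl | h
    · simp [SimpleGraph.dist_self]
    · simp [kb_dist_left r₁ r₂ h2 a b h, h]
  · simp [kb_dist_cross]
  · simp [kb_dist_cross']
  · rcases eq_or_ne a b with rfl | h
    · simp [SimpleGraph.dist_self]
    · simp [kb_dist_right r₁ r₂ h1 a b h, h]

/-- auxiliary matrix: all-2 on blocks -/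
noncomputable def kbN : Matrix VV VV ℝ := fun u v => if u.isLeft = v.isLeft then 2 else 0

/-- auxiliary diagonal matrix -/
noncomputable def kbD : Matrix VV VV ℝ :=
  Matrix.diagonal (Sum.elim (fun _ => (2 * r₁ : ℝ)) (fun _ => (2 * r₂ : ℝ)))

lemma kb_eccMatrix' (h1 : 2 ≤ r₁) (h2 : 2 ≤ r₂) :
    eccMatrix (G) + (2 : ℝ) • (1 : Matrix VV VV ℝ) = kbN r₁ r₂ := by
  ext u v
  rw [Matrix.add_apply, Matrix.smul_apply, Matrix.one_apply, kb_eccMatrix r₁ r₂ h1 h2, kbN]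
  rcases eq_or_ne u v with rfl | h
  · simp
  · by_cases hL : u.isLeft = v.isLeft <;> simp [h, hL]

lemma kbNN : kbN r₁ r₂ * kbN r₁ r₂ = kbD r₁ r₂ * kbN r₁ r₂ := by
  ext u v
  rw [Matrix.mul_apply, kbD, Matrix.diagonal_mul]
  rw [Fintype.sum_sum_type]
  rcases u with a | a <;> rcases v with b | b <;>
    simp [kbN, Finset.sum_const, Finset.card_univ, mul_comm] <;> ring

lemma kb_traceN : (kbN r₁ r₂).trace = 2 * r₁ + 2 * r₂ := by
  rw [Matrix.trace, Fintype.sum_sum_type]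
  simp [kbN, Matrix.diag, Finset.sum_const, Finset.card_univ]
  ring

lemma kb_traceNN : (kbN r₁ r₂ * kbN r₁ r₂).trace = (2 * r₁ : ℝ) ^ 2 + (2 * r₂) ^ 2 := by
  rw [kbNN, Matrix.trace, Fintype.sum_sum_type]
  simp [Matrix.diag, kbD, kbN, Matrix.diagonal_mul, Finset.sum_const, Finset.card_univ]
  ring

end KB

/-- for `r₁, r₂ ≥ 2` the complete bipartite graph `K_{r₁,r₂}` has exactly two
positive eccentricity eigenvalues, namely `2(r₁-1)` and `2(r₂-1)`. -/
theorem stmt6 (r₁ r₂ : ℕ) (h1 : 2 ≤ r₁) (h2 : 2 ≤ r₂) :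
    posEigCount (eccMatrix_isHermitian (completeBipartiteGraph (Fin r₁) (Fin r₂))) = 2 ∧
    (2 * ((r₁ : ℝ) - 1)) ∈ spectrum ℝ (eccMatrix (completeBipartiteGraph (Fin r₁) (Fin r₂))) ∧
    (2 * ((r₂ : ℝ) - 1)) ∈ spectrum ℝ (eccMatrix (completeBipartiteGraph (Fin r₁) (Fin r₂))) := by
  set M := eccMatrix (completeBipartiteGraph (Fin r₁) (Fin r₂)) with hMdef
  set hM := eccMatrix_isHermitian (completeBipartiteGraph (Fin r₁) (Fin r₂)) with hhMdef
  set f := hM.eigenvalues with hfdef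
  have hr₁ : (2 : ℝ) ≤ (r₁ : ℝ) := by exact_mod_cast h1
  have hr₂ : (2 : ℝ) ≤ (r₂ : ℝ) := by exact_mod_cast h2
  have hMN : M + (2 : ℝ) • (1 : Matrix (Fin r₁ ⊕ Fin r₂) (Fin r₁ ⊕ Fin r₂) ℝ) = kbN r₁ r₂ :=
    kb_eccMatrix' r₁ r₂ h1 h2
  have hcard : (Fintype.card (Fin r₁ ⊕ Fin r₂) : ℝ) = r₁ + r₂ := by simp
  -- trace of M is 0
  have htrM : M.trace = 0 := by
    rw [Matrix.trace]
    apply Finset.sum_eq_zero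
    intro u _
    simp [Matrix.diag, hMdef, kb_eccMatrix r₁ r₂ h1 h2]
  -- sum of shifted eigenvalues
  have hsumf : ∑ i, f i = 0 := by rw [hfdef, ← kb_trace_eq_sum_eig hM, htrM]
  have hsumg : ∑ i, (f i + 2) = 2 * (r₁ : ℝ) + 2 * r₂ := by
    rw [Finset.sum_add_distrib, hsumf, Finset.sum_const, Finset.card_univ, nsmul_eq_mul, hcard]
    ring
  -- trace of M*M
  have expand : (M + (2:ℝ) • (1 : Matrix (Fin r₁ ⊕ Fin r₂) (Fin r₁ ⊕ Fin r₂) ℝ)) *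
      (M + (2:ℝ) • 1) = M * M + (4:ℝ) • M + (4:ℝ) • (1 : Matrix _ _ ℝ) := by
    simp only [Matrix.add_mul, Matrix.mul_add, Matrix.smul_mul, Matrix.mul_smul,
      Matrix.one_mul, Matrix.mul_one, smul_smul]
    norm_num
    module
  have htrMM : (M * M).trace = (2 * (r₁:ℝ))^2 + (2 * r₂)^2 - 4 * (r₁ + r₂) := by
    have e2 : ((M + (2:ℝ) • (1 : Matrix (Fin r₁ ⊕ Fin r₂) (Fin r₁ ⊕ Fin r₂) ℝ)) *
        (M + (2:ℝ) • 1)).trace = (2 * (r₁:ℝ))^2 + (2 * r₂)^2 := by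
      rw [hMN, kb_traceNN]
    rw [expand, Matrix.trace_add, Matrix.trace_add, Matrix.trace_smul, Matrix.trace_smul,
      htrM, Matrix.trace_one, hcard] at e2
    simp only [smul_eq_mul, smul_zero] at e2
    linarith
  have hsumgsq : ∑ i, (f i + 2)^2 = (2 * (r₁:ℝ))^2 + (2 * r₂)^2 := by
    have e3 : ∑ i, (f i + 2)^2 = ∑ i, (f i ^ 2 + 4 * f i + 4) := by
      apply Finset.sum_congr rfl; intro i _; ring
    rw [e3, Finset.sum_add_distrib, Finset.sum_add_distrib, ← Finset.mul_sum, hsumf,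
      Finset.sum_const, Finset.card_univ, nsmul_eq_mul, hcard, hfdef,
      ← kb_trace_sq_eq_sum_eig_sq hM, htrMM]
    ring
  -- trichotomy for eigenvalues
  have htri : ∀ i, f i + 2 = 0 ∨ f i + 2 = 2 * r₁ ∨ f i + 2 = 2 * r₂ := by
    intro i
    by_cases h0 : f i + 2 = 0
    · exact Or.inl h0
    right
    obtain ⟨v, hv, hvne⟩ : ∃ v : (Fin r₁ ⊕ Fin r₂) → ℝ, M *ᵥ v = f i • v ∧ v ≠ 0 := by
      refine ⟨⇑(hM.eigenvectorBasis i), hM.mulVec_eigenvectorBasis i, ?_⟩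
      intro hcon
      exact hM.eigenvectorBasis.orthonormal.ne_zero i (by ext u; exact congrFun hcon u)
    have hNv : kbN r₁ r₂ *ᵥ v = (f i + 2) • v := by
      rw [← hMN, Matrix.add_mulVec, hv, Matrix.smul_mulVec, Matrix.one_mulVec, add_smul]
    have hNNv : (f i + 2) • ((f i + 2) • v) = (f i + 2) • (kbD r₁ r₂ *ᵥ v) := by
      have e1 : (kbN r₁ r₂ * kbN r₁ r₂) *ᵥ v = (f i + 2) • ((f i + 2) • v) := by
        rw [← Matrix.mulVec_mulVec, hNv, Matrix.mulVec_smul, hNv]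
      have e2 : (kbD r₁ r₂ * kbN r₁ r₂) *ᵥ v = (f i + 2) • (kbD r₁ r₂ *ᵥ v) := by
        rw [← Matrix.mulVec_mulVec, hNv, Matrix.mulVec_smul]
      rw [← e1, ← e2, kbNN]
    have hDv : kbD r₁ r₂ *ᵥ v = (f i + 2) • v :=
      (smul_right_injective ((Fin r₁ ⊕ Fin r₂) → ℝ) h0 hNNv.symm)
    obtain ⟨u, hu⟩ := Function.ne_iff.mp hvne
    have hcong := congrFun hDv u
    rw [kbD, Matrix.mulVec_diagonal] at hcong
    simp only [Pi.smul_apply, smul_eq_mul] at hcong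
    have : Sum.elim (fun _ => (2 * r₁ : ℝ)) (fun _ => (2 * r₂ : ℝ)) u = f i + 2 :=
      mul_right_cancel₀ (by simpa using hu) (by rw [hcong])
    rcases u with a | a
    · left; simpa using this.symm
    · right; simpa using this.symm
  -- counting positive eigenvalues
  obtain ⟨hk, hex1, hex2⟩ := kb_count f (2 * r₁) (2 * r₂) (by nlinarith) (by nlinarith)
    htri hsumg hsumgsq
  refine ⟨?_, ?_, ?_⟩
  · unfold posEigCount
    exact hk
  · obtain ⟨i, hi⟩ := hex1
    have he : 2 * ((r₁ : ℝ) - 1) = f i := by linarith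
    rw [he]
    exact hM.eigenvalues_mem_spectrum_real i
  · obtain ⟨i, hi⟩ := hex2
    have he : 2 * ((r₂ : ℝ) - 1) = f i := by linarith
    rw [he]
    exact hM.eigenvalues_mem_spectrum_real i
end

section
/- Let r₁, r₂, r₃ ≥ 1 and let H₁ be the join of the complete graph K_{r₁} with the disjoint union K_{r₂} ⊔ K_{r₃} of two complete graphs. Then the eccentricity matrix ε(H₁) has exactly one positive eigenvalue. -/
open Finset Polynomial

open Matrix

section abstractLemma

variable {n : Type*} [Fintype n] [DecidableEq n] {A : Matrix n n ℝ} (hA : A.IsHermitian)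

lemma basis_dot (i j : n) :
    (⇑(hA.eigenvectorBasis i) : n → ℝ) ⬝ᵥ ⇑(hA.eigenvectorBasis j) = if i = j then 1 else 0 := by
  have := orthonormal_iff_ite.mp hA.eigenvectorBasis.orthonormal i j
  rw [← this]
  simp [dotProduct, PiLp.inner_apply, RCLike.inner_apply, mul_comm]

lemma quad_expand (x : n → ℝ) :
    x ⬝ᵥ (A *ᵥ x) = ∑ k, hA.eigenvalues k * ((⇑(hA.eigenvectorBasis k) : n → ℝ) ⬝ᵥ x)^2 := by
  set U : Matrix n n ℝ := (hA.eigenvectorUnitary : Matrix n n ℝ) with hU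
  set y : n → ℝ := fun k => (⇑(hA.eigenvectorBasis k) : n → ℝ) ⬝ᵥ x with hy
  have hUapp : ∀ i k, U i k = hA.eigenvectorBasis k i := fun i k =>
    Matrix.IsHermitian.eigenvectorUnitary_apply hA i k
  have h1 : star U *ᵥ x = y := by
    funext k
    simp only [Matrix.mulVec, dotProduct, hy, Matrix.star_apply, star_trivial, hUapp]
  have h2 : x ᵥ* U = y := by
    funext k
    simp only [Matrix.vecMul, dotProduct, hy, hUapp, mul_comm]
  have hD : A = U * Matrix.diagonal hA.eigenvalues * star U := by
    have := hA.spectral_theorem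
    simpa using this
  calc x ⬝ᵥ (A *ᵥ x) = x ⬝ᵥ (U *ᵥ (Matrix.diagonal hA.eigenvalues *ᵥ (star U *ᵥ x))) := by
        rw [Matrix.mulVec_mulVec, Matrix.mulVec_mulVec, ← hD]
    _ = (x ᵥ* U) ⬝ᵥ (Matrix.diagonal hA.eigenvalues *ᵥ (star U *ᵥ x)) := by
        rw [Matrix.dotProduct_mulVec]
    _ = y ⬝ᵥ (Matrix.diagonal hA.eigenvalues *ᵥ y) := by rw [h1, h2]
    _ = ∑ k, hA.eigenvalues k * (y k)^2 := by
        simp only [dotProduct, Matrix.mulVec_diagonal]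
        exact Finset.sum_congr rfl fun k _ => by ring

lemma posEigCount_eq_one (w : n → ℝ) (hw : 0 < w ⬝ᵥ (A *ᵥ w))
    (hneg : ∀ x : n → ℝ, x ⬝ᵥ w = 0 → x ⬝ᵥ (A *ᵥ x) ≤ 0) :
    posEigCount hA = 1 := by
  -- existence
  have hex : ∃ i, 0 < hA.eigenvalues i := by
    by_contra h
    push_neg at h
    have := quad_expand hA w
    have hle : w ⬝ᵥ (A *ᵥ w) ≤ 0 := by
      rw [this]
      apply Finset.sum_nonpos
      intro k _
      exact mul_nonpos_of_nonpos_of_nonneg (h k) (sq_nonneg _)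
    linarith
  obtain ⟨i, hi⟩ := hex
  -- uniqueness
  have huniq : ∀ j, 0 < hA.eigenvalues j → j = i := by
    intro j hj
    by_contra hne
    -- construct x = a • Bi + b • Bj with x ⬝ᵥ w = 0 and positive quadratic form
    set u : n → ℝ := ⇑(hA.eigenvectorBasis i) with hu
    set v : n → ℝ := ⇑(hA.eigenvectorBasis j) with hv
    have hAu : A *ᵥ u = hA.eigenvalues i • u := hA.mulVec_eigenvectorBasis i
    have hAv : A *ᵥ v = hA.eigenvalues j • v := hA.mulVec_eigenvectorBasis j
    have huu : u ⬝ᵥ u = 1 := by have := basis_dot hA i i; simpa using this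
    have hvv : v ⬝ᵥ v = 1 := by have := basis_dot hA j j; simpa using this
    have huv : u ⬝ᵥ v = 0 := by have := basis_dot hA i j; simp [Ne.symm hne] at this; simpa using this
    have hvu : v ⬝ᵥ u = 0 := by have := basis_dot hA j i; simp [hne] at this; simpa using this
    obtain ⟨a, b, hab, hperp⟩ : ∃ a b : ℝ, ¬(a = 0 ∧ b = 0) ∧ a * (u ⬝ᵥ w) + b * (v ⬝ᵥ w) = 0 := by
      by_cases h0 : u ⬝ᵥ w = 0
      · exact ⟨1, 0, by simp, by simp [h0]⟩
      · exact ⟨v ⬝ᵥ w, -(u ⬝ᵥ w), fun hc => h0 (by simpa using hc.2), by ring⟩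
    set x : n → ℝ := a • u + b • v with hx
    have hxw : x ⬝ᵥ w = 0 := by
      simp only [hx, add_dotProduct, smul_dotProduct, smul_eq_mul]
      exact hperp
    have hquad : x ⬝ᵥ (A *ᵥ x) = hA.eigenvalues i * a^2 + hA.eigenvalues j * b^2 := by
      simp only [hx, Matrix.mulVec_add, Matrix.mulVec_smul, hAu, hAv,
        add_dotProduct, dotProduct_add, smul_dotProduct,
        dotProduct_smul, smul_eq_mul, huu, hvv, huv, hvu]
      ring
    have hpos : 0 < x ⬝ᵥ (A *ᵥ x) := by
      rw [hquad]
      rcases not_and_or.mp hab with ha | hb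
      · have : 0 < hA.eigenvalues i * a^2 := by positivity
        nlinarith [sq_nonneg b, mul_nonneg hj.le (sq_nonneg b)]
      · have : 0 < hA.eigenvalues j * b^2 := by positivity
        nlinarith [mul_nonneg hi.le (sq_nonneg a)]
    exact absurd (hneg x hxw) (not_le.mpr hpos)
  rw [posEigCount, Finset.card_eq_one]
  exact ⟨i, Finset.eq_singleton_iff_unique_mem.mpr
    ⟨Finset.mem_filter.mpr ⟨Finset.mem_univ i, hi⟩,
     fun j hj => huniq j (Finset.mem_filter.mp hj).2⟩⟩

end abstractLemma

section conc

variable (r₁ r₂ r₃ : ℕ)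

abbrev VV := Fin r₁ ⊕ (Fin r₂ ⊕ Fin r₃)

abbrev GG : SimpleGraph (VV r₁ r₂ r₃) :=
  graphJoin (⊤ : SimpleGraph (Fin r₁))
    (graphSum (⊤ : SimpleGraph (Fin r₂)) (⊤ : SimpleGraph (Fin r₃)))

variable {r₁ r₂ r₃ : ℕ}

-- adjacency facts
lemma adj_ll {a a' : Fin r₁} : (GG r₁ r₂ r₃).Adj (Sum.inl a) (Sum.inl a') ↔ a ≠ a' := by
  show (⊤ : SimpleGraph (Fin r₁)).Adj a a' ↔ a ≠ a'
  simp

lemma adj_lr (a : Fin r₁) (x : Fin r₂ ⊕ Fin r₃) :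
    (GG r₁ r₂ r₃).Adj (Sum.inl a) (Sum.inr x) := by
  show True; trivial

lemma adj_rl (a : Fin r₁) (x : Fin r₂ ⊕ Fin r₃) :
    (GG r₁ r₂ r₃).Adj (Sum.inr x) (Sum.inl a) := by
  show True; trivial

lemma adj_bb {b b' : Fin r₂} :
    (GG r₁ r₂ r₃).Adj (Sum.inr (Sum.inl b)) (Sum.inr (Sum.inl b')) ↔ b ≠ b' := by
  show (⊤ : SimpleGraph (Fin r₂)).Adj b b' ↔ b ≠ b'
  simp

lemma adj_cc {c c' : Fin r₃} :
    (GG r₁ r₂ r₃).Adj (Sum.inr (Sum.inr c)) (Sum.inr (Sum.inr c')) ↔ c ≠ c' := by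
  show (⊤ : SimpleGraph (Fin r₃)).Adj c c' ↔ c ≠ c'
  simp

lemma not_adj_bc (b : Fin r₂) (c : Fin r₃) :
    ¬ (GG r₁ r₂ r₃).Adj (Sum.inr (Sum.inl b)) (Sum.inr (Sum.inr c)) := by
  show ¬ False; exact not_false

-- distance facts
lemma dist_ll (a a' : Fin r₁) :
    (GG r₁ r₂ r₃).dist (Sum.inl a) (Sum.inl a') = if a = a' then 0 else 1 := by
  split_ifs with h
  · subst h; simp [SimpleGraph.dist_self]
  · exact SimpleGraph.dist_eq_one_iff_adj.mpr (adj_ll.mpr h)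

lemma dist_lr (a : Fin r₁) (x : Fin r₂ ⊕ Fin r₃) :
    (GG r₁ r₂ r₃).dist (Sum.inl a) (Sum.inr x) = 1 :=
  SimpleGraph.dist_eq_one_iff_adj.mpr (adj_lr a x)

lemma dist_bb (b b' : Fin r₂) :
    (GG r₁ r₂ r₃).dist (Sum.inr (Sum.inl b)) (Sum.inr (Sum.inl b')) = if b = b' then 0 else 1 := by
  split_ifs with h
  · subst h; simp [SimpleGraph.dist_self]
  · exact SimpleGraph.dist_eq_one_iff_adj.mpr (adj_bb.mpr h)

lemma dist_cc (c c' : Fin r₃) :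
    (GG r₁ r₂ r₃).dist (Sum.inr (Sum.inr c)) (Sum.inr (Sum.inr c')) = if c = c' then 0 else 1 := by
  split_ifs with h
  · subst h; simp [SimpleGraph.dist_self]
  · exact SimpleGraph.dist_eq_one_iff_adj.mpr (adj_cc.mpr h)

lemma dist_bc (h1 : 1 ≤ r₁) (b : Fin r₂) (c : Fin r₃) :
    (GG r₁ r₂ r₃).dist (Sum.inr (Sum.inl b)) (Sum.inr (Sum.inr c)) = 2 := by
  set a₀ : Fin r₁ := ⟨0, h1⟩ with ha₀
  have hadj1 : (GG r₁ r₂ r₃).Adj (Sum.inr (Sum.inl b)) (Sum.inl a₀) :=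
    adj_rl a₀ ((Sum.inl b : Fin r₂ ⊕ Fin r₃))
  have hadj2 : (GG r₁ r₂ r₃).Adj (Sum.inl a₀) (Sum.inr (Sum.inr c)) :=
    adj_lr a₀ ((Sum.inr c : Fin r₂ ⊕ Fin r₃))
  have hle : (GG r₁ r₂ r₃).dist (Sum.inr (Sum.inl b)) (Sum.inr (Sum.inr c)) ≤ 2 := by
    have := SimpleGraph.dist_le
      (SimpleGraph.Walk.cons hadj1 (SimpleGraph.Walk.cons hadj2 SimpleGraph.Walk.nil))
    simpa [SimpleGraph.Walk.length_cons, SimpleGraph.Walk.length_nil] using this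
  have hne : (Sum.inr (Sum.inl b) : VV r₁ r₂ r₃) ≠ Sum.inr (Sum.inr c) := by simp
  have h0 : (GG r₁ r₂ r₃).dist (Sum.inr (Sum.inl b)) (Sum.inr (Sum.inr c)) ≠ 0 := by
    rw [SimpleGraph.dist_ne_zero_iff_ne_and_reachable]
    exact ⟨hne, hadj1.reachable.trans hadj2.reachable⟩
  have hone : (GG r₁ r₂ r₃).dist (Sum.inr (Sum.inl b)) (Sum.inr (Sum.inr c)) ≠ 1 := by
    rw [Ne, SimpleGraph.dist_eq_one_iff_adj]
    exact not_adj_bc b c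
  omega

-- eccentricity facts
lemma ecc_l (h2 : 1 ≤ r₂) (a : Fin r₁) : ecc (GG r₁ r₂ r₃) (Sum.inl a) = 1 := by
  apply le_antisymm
  · apply Finset.sup_le
    rintro (a'|x) _
    · rw [dist_ll]; split_ifs <;> omega
    · rw [dist_lr]
  · have := Finset.le_sup (f := (GG r₁ r₂ r₃).dist (Sum.inl a))
      (Finset.mem_univ (Sum.inr (Sum.inl ⟨0, h2⟩) : VV r₁ r₂ r₃))
    rwa [dist_lr] at this

lemma ecc_b (h1 : 1 ≤ r₁) (h3 : 1 ≤ r₃) (b : Fin r₂) : ecc (GG r₁ r₂ r₃) (Sum.inr (Sum.inl b)) = 2 := by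
  apply le_antisymm
  · apply Finset.sup_le
    rintro (a|x|y) _
    · rw [SimpleGraph.dist_comm, dist_lr]; omega
    · rw [dist_bb]; split_ifs <;> omega
    · rw [dist_bc h1]
  · have := Finset.le_sup (f := (GG r₁ r₂ r₃).dist (Sum.inr (Sum.inl b)))
      (Finset.mem_univ (Sum.inr (Sum.inr ⟨0, h3⟩) : VV r₁ r₂ r₃))
    rwa [dist_bc h1] at this

lemma ecc_c (h1 : 1 ≤ r₁) (h2 : 1 ≤ r₂) (c : Fin r₃) : ecc (GG r₁ r₂ r₃) (Sum.inr (Sum.inr c)) = 2 := by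
  apply le_antisymm
  · apply Finset.sup_le
    rintro (a|x|y) _
    · rw [SimpleGraph.dist_comm, dist_lr]; omega
    · rw [SimpleGraph.dist_comm, dist_bc h1]
    · rw [dist_cc]; split_ifs <;> omega
  · have := Finset.le_sup (f := (GG r₁ r₂ r₃).dist (Sum.inr (Sum.inr c)))
      (Finset.mem_univ (Sum.inr (Sum.inl ⟨0, h2⟩) : VV r₁ r₂ r₃))
    rwa [SimpleGraph.dist_comm, dist_bc h1] at this

-- the eccentricity matrix, explicitly
def Mconc : Matrix (VV r₁ r₂ r₃) (VV r₁ r₂ r₃) ℝ := fun u v =>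
  match u, v with
  | Sum.inl a, Sum.inl a' => if a = a' then 0 else 1
  | Sum.inl _, Sum.inr _ => 1
  | Sum.inr _, Sum.inl _ => 1
  | Sum.inr (Sum.inl _), Sum.inr (Sum.inl _) => 0
  | Sum.inr (Sum.inr _), Sum.inr (Sum.inr _) => 0
  | Sum.inr (Sum.inl _), Sum.inr (Sum.inr _) => 2
  | Sum.inr (Sum.inr _), Sum.inr (Sum.inl _) => 2

lemma eccMatrix_eq (h1 : 1 ≤ r₁) (h2 : 1 ≤ r₂) (h3 : 1 ≤ r₃) : eccMatrix (GG r₁ r₂ r₃) = Mconc := by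
  funext u v
  rw [eccMatrix]
  match u, v with
  | Sum.inl a, Sum.inl a' =>
    rw [dist_ll, ecc_l h2, ecc_l h2, Mconc]
    by_cases h : a = a' <;> simp [h]
  | Sum.inl a, Sum.inr x =>
    rw [dist_lr, ecc_l h2, Mconc]
    cases x <;> simp [ecc_b h1 h3, ecc_c h1 h2]
  | Sum.inr x, Sum.inl a =>
    rw [SimpleGraph.dist_comm, dist_lr, ecc_l h2, Mconc]
    cases x <;> simp [ecc_b h1 h3, ecc_c h1 h2]
  | Sum.inr (Sum.inl b), Sum.inr (Sum.inl b') =>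
    rw [dist_bb, ecc_b h1 h3, ecc_b h1 h3, Mconc]
    by_cases h : b = b' <;> simp [h]
  | Sum.inr (Sum.inr c), Sum.inr (Sum.inr c') =>
    rw [dist_cc, ecc_c h1 h2, ecc_c h1 h2, Mconc]
    by_cases h : c = c' <;> simp [h]
  | Sum.inr (Sum.inl b), Sum.inr (Sum.inr c) =>
    rw [dist_bc h1, ecc_b h1 h3, ecc_c h1 h2, Mconc]
    simp
  | Sum.inr (Sum.inr c), Sum.inr (Sum.inl b) =>
    rw [SimpleGraph.dist_comm, dist_bc h1, ecc_b h1 h3, ecc_c h1 h2, Mconc]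
    simp

-- quadratic form of Mconc
lemma quad_Mconc (x : VV r₁ r₂ r₃ → ℝ) :
    x ⬝ᵥ ((Mconc : Matrix (VV r₁ r₂ r₃) (VV r₁ r₂ r₃) ℝ) *ᵥ x) =
      (∑ a, x (Sum.inl a))^2 - (∑ a, (x (Sum.inl a))^2)
      + 2 * (∑ a, x (Sum.inl a)) * ((∑ b, x (Sum.inr (Sum.inl b))) + (∑ c, x (Sum.inr (Sum.inr c))))
      + 4 * (∑ b, x (Sum.inr (Sum.inl b))) * (∑ c, x (Sum.inr (Sum.inr c))) := by
  set s := ∑ a, x (Sum.inl a) with hs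
  set t := ∑ b, x (Sum.inr (Sum.inl b)) with ht
  set u := ∑ c, x (Sum.inr (Sum.inr c)) with hu
  have hrow : ∀ w : VV r₁ r₂ r₃, ((Mconc : Matrix (VV r₁ r₂ r₃) (VV r₁ r₂ r₃) ℝ) *ᵥ x) w =
      match w with
      | Sum.inl a => (s - x (Sum.inl a)) + t + u
      | Sum.inr (Sum.inl _) => s + 2 * u
      | Sum.inr (Sum.inr _) => s + 2 * t := by
    rintro (a|b|c)
    · simp only [Matrix.mulVec, dotProduct, Mconc, Fintype.sum_sum_type,
        ite_mul, zero_mul, one_mul]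
      have key : (∑ a' : Fin r₁, if a = a' then (0:ℝ) else x (Sum.inl a'))
          = s - x (Sum.inl a) := by
        rw [Finset.sum_congr rfl (fun a' _ => show
            (if a = a' then (0:ℝ) else x (Sum.inl a'))
              = x (Sum.inl a') - (if a = a' then x (Sum.inl a') else 0) from by
          split <;> ring), Finset.sum_sub_distrib, Finset.sum_ite_eq]
        simp [← hs]
      rw [key, ← ht, ← hu]
      ring
    · simp only [Matrix.mulVec, dotProduct, Mconc, Fintype.sum_sum_type,
        zero_mul, one_mul, Finset.sum_const_zero]
      rw [← Finset.mul_sum, ← hu, ← hs]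
      try ring
    · simp only [Matrix.mulVec, dotProduct, Mconc, Fintype.sum_sum_type,
        zero_mul, one_mul, Finset.sum_const_zero]
      rw [← Finset.mul_sum, ← ht, ← hs]
      try ring
  rw [dotProduct]
  rw [Fintype.sum_sum_type]
  simp only [Fintype.sum_sum_type, hrow]
  have e1 : ∑ a, x (Sum.inl a) * ((s - x (Sum.inl a)) + t + u)
      = s * s - (∑ a, (x (Sum.inl a))^2) + s * t + s * u := by
    rw [Finset.sum_congr rfl (fun a _ => by ring :
      ∀ a ∈ Finset.univ, x (Sum.inl a) * ((s - x (Sum.inl a)) + t + u)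
        = x (Sum.inl a) * s - (x (Sum.inl a))^2 + x (Sum.inl a) * t + x (Sum.inl a) * u)]
    simp [Finset.sum_add_distrib, Finset.sum_sub_distrib, ← Finset.sum_mul, ← hs]
    try ring
  have e2 : ∑ b, x (Sum.inr (Sum.inl b)) * (s + 2 * u) = t * (s + 2 * u) := by
    rw [← Finset.sum_mul, ← ht]
  have e3 : ∑ c, x (Sum.inr (Sum.inr c)) * (s + 2 * t) = u * (s + 2 * t) := by
    rw [← Finset.sum_mul, ← hu]
  rw [e1, e2, e3]
  ring

end conc

/-- the join of `K_{r₁}` with `K_{r₂} ⊔ K_{r₃}` has exactly one positive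
eccentricity eigenvalue. -/
theorem stmt9 (r₁ r₂ r₃ : ℕ) (h1 : 1 ≤ r₁) (h2 : 1 ≤ r₂) (h3 : 1 ≤ r₃) :
    posEigCount (eccMatrix_isHermitian (graphJoin (⊤ : SimpleGraph (Fin r₁))
      (graphSum (⊤ : SimpleGraph (Fin r₂)) (⊤ : SimpleGraph (Fin r₃))))) = 1 := by
  have hM : eccMatrix (GG r₁ r₂ r₃) = Mconc := eccMatrix_eq h1 h2 h3
  have hr1 : (1:ℝ) ≤ r₁ := by exact_mod_cast h1
  have hr2 : (1:ℝ) ≤ r₂ := by exact_mod_cast h2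
  have hr3 : (1:ℝ) ≤ r₃ := by exact_mod_cast h3
  apply posEigCount_eq_one (eccMatrix_isHermitian (GG r₁ r₂ r₃)) (fun _ => (1:ℝ))
  · rw [hM, quad_Mconc]
    simp only [Finset.sum_const, Finset.card_univ, Fintype.card_fin, nsmul_eq_mul, mul_one,
      one_pow]
    nlinarith [hr1, hr2, hr3]
  · intro x hx
    rw [hM, quad_Mconc]
    have hx' : (∑ a, x (Sum.inl a)) + ((∑ b, x (Sum.inr (Sum.inl b)))
        + (∑ c, x (Sum.inr (Sum.inr c)))) = 0 := by
      have : x ⬝ᵥ (fun _ => (1:ℝ)) = ∑ u, x u := by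
        simp [dotProduct]
      rw [this, Fintype.sum_sum_type, Fintype.sum_sum_type] at hx
      linarith [hx]
    have hq : 0 ≤ ∑ a, (x (Sum.inl a))^2 :=
      Finset.sum_nonneg fun a _ => sq_nonneg _
    nlinarith [sq_nonneg ((∑ b, x (Sum.inr (Sum.inl b))) - (∑ c, x (Sum.inr (Sum.inr c)))), hq,
      sq_nonneg ((∑ b, x (Sum.inr (Sum.inl b))) + (∑ c, x (Sum.inr (Sum.inr c))))]
end

section
/- Let k ≥ 4 and r₂, r₃, …, r_k ≥ 1, and let H be the join of a single vertex with the disjoint union of the empty graph on r₂ vertices and the complete graphs K_{r₃}, …, K_{r_k}. Then the eccentricity matrix ε(H) has exactly one positive eigenvalue. -/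
open Finset Polynomial

namespace Stmt13Aux

open Matrix

/-! ### Generic eigenvalue-counting lemmas -/

lemma trace_eq_sum_eigs {n : Type*} [Fintype n] [DecidableEq n] {A : Matrix n n ℝ}
    (hA : A.IsHermitian) : A.trace = ∑ i, hA.eigenvalues i := by
  conv_lhs => rw [hA.spectral_theorem]
  rw [Unitary.conjStarAlgAut_apply, Matrix.trace_mul_cycle, Unitary.coe_star_mul_self, one_mul, Matrix.trace_diagonal]
  simp

lemma eq_zero_of_eigs_zero {n : Type*} [Fintype n] [DecidableEq n] {A : Matrix n n ℝ}
    (hA : A.IsHermitian) (h : ∀ i, hA.eigenvalues i = 0) : A = 0 := by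
  have hd : Matrix.diagonal (RCLike.ofReal ∘ hA.eigenvalues) = (0 : Matrix n n ℝ) := by
    ext i j
    rcases eq_or_ne i j with rfl | hij
    · simp [h i]
    · simp [Matrix.diagonal_apply_ne _ hij]
  rw [hA.spectral_theorem, hd]
  simp

lemma dot_eigenvectorBasis {n : Type*} [Fintype n] [DecidableEq n] {A : Matrix n n ℝ}
    (hA : A.IsHermitian) (i j : n) :
    (⇑(hA.eigenvectorBasis i) : n → ℝ) ⬝ᵥ ⇑(hA.eigenvectorBasis j) = if i = j then 1 else 0 := by
  have := orthonormal_iff_ite.mp hA.eigenvectorBasis.orthonormal i j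
  rw [← this, EuclideanSpace.inner_eq_star_dotProduct]
  simp [dotProduct, mul_comm]

lemma posEig_le_one {n : Type*} [Fintype n] [DecidableEq n] {A : Matrix n n ℝ}
    (hA : A.IsHermitian) (f : n → ℝ)
    (hf : ∀ x : n → ℝ, f ⬝ᵥ x = 0 → x ⬝ᵥ (A *ᵥ x) ≤ 0) :
    posEigCount hA ≤ 1 := by
  by_contra hcon
  push_neg at hcon
  obtain ⟨i, hi, j, hj, hij⟩ := Finset.one_lt_card.mp hcon
  rw [Finset.mem_filter] at hi hj
  have hli := hi.2
  have hlj := hj.2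
  set v : n → ℝ := ⇑(hA.eigenvectorBasis i) with hv
  set w : n → ℝ := ⇑(hA.eigenvectorBasis j) with hw
  have hvv : v ⬝ᵥ v = 1 := by rw [hv, dot_eigenvectorBasis]; simp
  have hww : w ⬝ᵥ w = 1 := by rw [hw, dot_eigenvectorBasis]; simp
  have hvw : v ⬝ᵥ w = 0 := by rw [hv, hw, dot_eigenvectorBasis, if_neg hij]
  have hwv : w ⬝ᵥ v = 0 := by rw [hv, hw, dot_eigenvectorBasis, if_neg (Ne.symm hij)]
  have hAv : A *ᵥ v = hA.eigenvalues i • v := hA.mulVec_eigenvectorBasis i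
  have hAw : A *ᵥ w = hA.eigenvalues j • w := hA.mulVec_eigenvectorBasis j
  have hq : ∀ a b : ℝ, (a • v + b • w) ⬝ᵥ (A *ᵥ (a • v + b • w))
      = a^2 * hA.eigenvalues i + b^2 * hA.eigenvalues j := by
    intro a b
    rw [Matrix.mulVec_add, Matrix.mulVec_smul, Matrix.mulVec_smul, hAv, hAw]
    simp only [dotProduct_add, add_dotProduct, smul_dotProduct,
      dotProduct_smul, smul_eq_mul]
    rw [hvv, hww, hvw, hwv]
    ring
  rcases eq_or_ne (f ⬝ᵥ v) 0 with hfv | hfv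
  · have := hf v hfv
    rw [show v = (1:ℝ) • v + (0:ℝ) • w by simp] at this
    rw [hq 1 0] at this
    nlinarith
  · set a : ℝ := f ⬝ᵥ w with ha
    set b : ℝ := f ⬝ᵥ v with hb
    have hzero : f ⬝ᵥ (a • v + (-b) • w) = 0 := by
      simp only [dotProduct_add, dotProduct_smul, smul_eq_mul, ← ha, ← hb]
      ring
    have := hf _ hzero
    rw [hq a (-b)] at this
    nlinarith [sq_nonneg a, sq_nonneg b, mul_nonneg (sq_nonneg a) hli.le,
      mul_pos (pow_pos (abs_pos.mpr hfv) 2) hlj, sq_abs b]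

/-! ### The explicit eccentricity matrix of the graph and its quadratic form -/

variable {k : ℕ} {r : Fin (k - 1) → ℕ}

noncomputable def Mex (r : Fin (k - 1) → ℕ) :
    Matrix (Unit ⊕ Σ i : Fin (k-1), Fin (r i)) (Unit ⊕ Σ i : Fin (k-1), Fin (r i)) ℝ :=
  fun u v => match u, v with
  | Sum.inl _, Sum.inl _ => 0
  | Sum.inl _, Sum.inr _ => 1
  | Sum.inr _, Sum.inl _ => 1
  | Sum.inr a, Sum.inr b => if a = b ∨ (a.1 = b.1 ∧ (a.1:ℕ) ≠ 0) then 0 else 2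

lemma quad_eq (x : (Unit ⊕ Σ i : Fin (k-1), Fin (r i)) → ℝ) :
    x ⬝ᵥ (Mex r *ᵥ x) =
      2 * x (Sum.inl ()) * (∑ w, x (Sum.inr w)) + 2 * (∑ w, x (Sum.inr w))^2
      - 2 * ∑ i : Fin (k-1), (if (i:ℕ) = 0 then ∑ p, (x (Sum.inr ⟨i,p⟩))^2
          else (∑ p, x (Sum.inr ⟨i,p⟩))^2) := by
  set y : (Σ i : Fin (k-1), Fin (r i)) → ℝ := fun w => x (Sum.inr w) with hy
  have inner : ∀ a : Σ i : Fin (k-1), Fin (r i),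
      ∑ w, (if a = w ∨ (a.1 = w.1 ∧ ((a.1:ℕ) ≠ 0)) then (2:ℝ) else 0) * (y a * y w)
      = if (a.1:ℕ) = 0 then 2 * (y a)^2 else 2 * y a * ∑ q, y ⟨a.1, q⟩ := by
    rintro ⟨i, p⟩
    rw [← Finset.univ_sigma_univ, Finset.sum_sigma]
    rw [Finset.sum_eq_single i (fun j _ hj => Finset.sum_eq_zero fun q _ => by
      have hn : ¬ ((⟨i,p⟩ : Σ i : Fin (k-1), Fin (r i)) = ⟨j, q⟩ ∨
          ((⟨i,p⟩ : Σ i : Fin (k-1), Fin (r i)).1 = (⟨j,q⟩ : Σ i : Fin (k-1), Fin (r i)).1 ∧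
            (((⟨i,p⟩ : Σ i : Fin (k-1), Fin (r i)).1 : ℕ) ≠ 0))) := by
        rintro (h | ⟨h1, -⟩)
        · exact hj (congrArg Sigma.fst h).symm
        · exact hj h1.symm
      rw [if_neg hn, zero_mul]) (by simp)]
    rcases eq_or_ne (i : ℕ) 0 with h0 | h0
    · rw [if_pos h0]
      rw [Finset.sum_eq_single p (fun q _ hq => by
        have hn : ¬ ((⟨i,p⟩ : Σ i : Fin (k-1), Fin (r i)) = ⟨i, q⟩ ∨
            ((⟨i,p⟩ : Σ i : Fin (k-1), Fin (r i)).1 = (⟨i,q⟩ : Σ i : Fin (k-1), Fin (r i)).1 ∧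
              (((⟨i,p⟩ : Σ i : Fin (k-1), Fin (r i)).1 : ℕ) ≠ 0))) := by
          rintro (h | ⟨-, h⟩)
          · have hpq : p = q := by simpa using h
            exact hq hpq.symm
          · exact h h0
        rw [if_neg hn, zero_mul]) (by simp)]
      rw [if_pos (Or.inl rfl)]; ring
    · rw [if_neg h0]
      rw [Finset.sum_congr rfl (fun q _ => by
        rw [if_pos (Or.inr ⟨rfl, h0⟩)] :
        ∀ q ∈ Finset.univ, _ = 2 * (y ⟨i,p⟩ * y ⟨i,q⟩))]
      rw [Finset.mul_sum]
      apply Finset.sum_congr rfl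
      intro q _; ring
  have key : ∑ a, ∑ w, (if a = w ∨ (a.1 = w.1 ∧ ((a.1:ℕ) ≠ 0)) then (2:ℝ) else 0) * (y a * y w)
      = 2 * ∑ i : Fin (k-1), (if (i:ℕ) = 0 then ∑ p, (y ⟨i,p⟩)^2 else (∑ p, y ⟨i,p⟩)^2) := by
    rw [Finset.sum_congr rfl fun a _ => inner a]
    rw [← Finset.univ_sigma_univ, Finset.sum_sigma, Finset.mul_sum]
    refine Finset.sum_congr rfl fun i _ => ?_
    rcases eq_or_ne (i : ℕ) 0 with h | h
    · simp only [if_pos h, Finset.mul_sum]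
    · simp only [if_neg h]
      trans (∑ p, 2 * y ⟨i,p⟩) * ∑ q, y ⟨i,q⟩
      · exact (Finset.sum_mul Finset.univ (fun p => 2 * y ⟨i,p⟩) (∑ q, y ⟨i,q⟩)).symm
      rw [← Finset.mul_sum]
      ring
  have hsplit : x ⬝ᵥ (Mex r *ᵥ x)
      = x (Sum.inl ()) * (∑ w, y w)
        + ∑ a, y a * (x (Sum.inl ()) + ∑ w,
            (if a = w ∨ (a.1 = w.1 ∧ ((a.1:ℕ) ≠ 0)) then (0:ℝ) else 2) * y w) := by
    simp only [dotProduct, Matrix.mulVec, Fintype.sum_sum_type, Finset.univ_unique,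
      Finset.sum_singleton, Mex, hy]
    simp only [zero_mul, one_mul, zero_add]
  rw [hsplit]
  have inner2 : ∀ a : Σ i : Fin (k-1), Fin (r i),
      y a * (x (Sum.inl ()) + ∑ w,
          (if a = w ∨ (a.1 = w.1 ∧ ((a.1:ℕ) ≠ 0)) then (0:ℝ) else 2) * y w)
      = y a * x (Sum.inl ()) + ((∑ w, 2 * (y a * y w))
          - ∑ w, (if a = w ∨ (a.1 = w.1 ∧ ((a.1:ℕ) ≠ 0)) then (2:ℝ) else 0) * (y a * y w)) := by
    intro a
    rw [mul_add, Finset.mul_sum, ← Finset.sum_sub_distrib]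
    congr 1
    apply Finset.sum_congr rfl
    intro w _
    split <;> ring
  rw [Finset.sum_congr rfl fun a _ => inner2 a, Finset.sum_add_distrib,
    Finset.sum_sub_distrib, key]
  have h1 : ∑ a : Σ i : Fin (k-1), Fin (r i), y a * x (Sum.inl ()) = (∑ a, y a) * x (Sum.inl ()) :=
    (Finset.sum_mul ..).symm
  have h2 : ∑ a : Σ i : Fin (k-1), Fin (r i), ∑ w, 2 * (y a * y w) = 2 * (∑ w, y w)^2 := by
    have : ∀ a : Σ i : Fin (k-1), Fin (r i), ∑ w, 2 * (y a * y w) = (2 * y a) * ∑ w, y w := by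
      intro a
      rw [Finset.mul_sum]
      exact Finset.sum_congr rfl fun w _ => by ring
    rw [Finset.sum_congr rfl fun a _ => this a, ← Finset.sum_mul, ← Finset.mul_sum]
    ring
  rw [h1, h2]
  ring

/-! ### Graph-theoretic facts -/

abbrev G (r : Fin (k - 1) → ℕ) : SimpleGraph (Unit ⊕ Σ i : Fin (k-1), Fin (r i)) :=
  graphJoin (⊤ : SimpleGraph Unit) (blocksGraph r (fun i => (i : ℕ) ≠ 0))

lemma adj_lr (a b) : (G r).Adj (Sum.inl a) (Sum.inr b) := trivial
lemma adj_rl (a b) : (G r).Adj (Sum.inr a) (Sum.inl b) := trivial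
lemma adj_rr {a b} : (G r).Adj (Sum.inr a) (Sum.inr b) ↔ a ≠ b ∧ a.1 = b.1 ∧ (a.1 : ℕ) ≠ 0 :=
  Iff.rfl

lemma dist_le_two (u v : Unit ⊕ Σ i : Fin (k-1), Fin (r i)) : (G r).dist u v ≤ 2 := by
  match u, v with
  | Sum.inl a, Sum.inl b => simp [SimpleGraph.dist_self]
  | Sum.inl a, Sum.inr b =>
      exact le_trans (SimpleGraph.dist_le (adj_lr a b).toWalk) (by simp)
  | Sum.inr a, Sum.inl b =>
      exact le_trans (SimpleGraph.dist_le (adj_rl a b).toWalk) (by simp)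
  | Sum.inr a, Sum.inr b =>
      exact le_trans (SimpleGraph.dist_le
        ((adj_rl a ()).toWalk.append (adj_lr () b).toWalk)) (by simp)

lemma dist_lr (a b) : (G r).dist (Sum.inl a) (Sum.inr b) = 1 :=
  SimpleGraph.dist_eq_one_iff_adj.mpr (adj_lr a b)

lemma dist_rl (a b) : (G r).dist (Sum.inr a) (Sum.inl b) = 1 :=
  SimpleGraph.dist_eq_one_iff_adj.mpr (adj_rl a b)

lemma dist_rr {a b} (hab : a ≠ b) (h : ¬ (G r).Adj (Sum.inr a) (Sum.inr b)) :
    (G r).dist (Sum.inr a) (Sum.inr b) = 2 := by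
  have h2 := dist_le_two (r := r) (Sum.inr a) (Sum.inr b)
  have h0 : (G r).dist (Sum.inr a) (Sum.inr b) ≠ 0 := by
    rw [Ne, SimpleGraph.dist_eq_zero_iff_eq_or_not_reachable]
    push_neg
    exact ⟨by simp [hab], ⟨(adj_rl a ()).toWalk.append (adj_lr () b).toWalk⟩⟩
  have h1 : (G r).dist (Sum.inr a) (Sum.inr b) ≠ 1 := by
    rw [Ne, SimpleGraph.dist_eq_one_iff_adj]; exact h
  omega

variable (hk : 4 ≤ k) (hr : ∀ i, 1 ≤ r i)

include hk hr in
lemma ecc_l (a : Unit) : ecc (G r) (Sum.inl a) = 1 := by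
  apply le_antisymm
  · apply Finset.sup_le
    intro v _
    match v with
    | Sum.inl b => cases a; cases b; simp [SimpleGraph.dist_self]
    | Sum.inr b => exact le_of_eq (dist_lr a b)
  · have x0 : Σ i : Fin (k-1), Fin (r i) :=
      ⟨⟨0, by omega⟩, ⟨0, by have := hr ⟨0, by omega⟩; omega⟩⟩
    calc 1 = (G r).dist (Sum.inl a) (Sum.inr x0) := (dist_lr _ _).symm
      _ ≤ _ := Finset.le_sup (Finset.mem_univ _)

include hk hr in
lemma ecc_r (a : Σ i : Fin (k-1), Fin (r i)) : ecc (G r) (Sum.inr a) = 2 := by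
  apply le_antisymm
  · exact Finset.sup_le fun v _ => dist_le_two _ _
  · set j : Fin (k-1) := if (a.1 : ℕ) = 0 then ⟨1, by omega⟩ else ⟨0, by omega⟩ with hj
    have hja : j ≠ a.1 := by
      rcases eq_or_ne (a.1 : ℕ) 0 with h | h
      · rw [hj, if_pos h]
        intro he
        have h1 : (a.1 : ℕ) = 1 := by rw [← he]
        omega
      · rw [hj, if_neg h]
        intro he
        exact h (by rw [← he])
    set b : Σ i : Fin (k-1), Fin (r i) := ⟨j, ⟨0, by have := hr j; omega⟩⟩ with hb
    have hab : a ≠ b := by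
      intro h; exact hja (by rw [h])
    have hd : (G r).dist (Sum.inr a) (Sum.inr b) = 2 := by
      apply dist_rr hab
      rw [adj_rr]
      rintro ⟨-, h1, -⟩; exact hja h1.symm
    calc 2 = (G r).dist (Sum.inr a) (Sum.inr b) := hd.symm
      _ ≤ _ := Finset.le_sup (Finset.mem_univ _)

include hk hr in
lemma eccMatrix_eq : eccMatrix (G r) = Mex r := by
  ext u v
  match u, v with
  | Sum.inl a, Sum.inl b =>
      cases a; cases b
      rw [eccMatrix, if_neg, Mex]
      rw [SimpleGraph.dist_self, ecc_l hk hr]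
      simp
  | Sum.inl a, Sum.inr b =>
      rw [eccMatrix, if_pos, Mex, dist_lr]
      · norm_num
      · rw [dist_lr, ecc_l hk hr, ecc_r hk hr]
        rfl
  | Sum.inr a, Sum.inl b =>
      rw [eccMatrix, if_pos, Mex, dist_rl]
      · norm_num
      · rw [dist_rl, ecc_l hk hr, ecc_r hk hr]
        rfl
  | Sum.inr a, Sum.inr b =>
      rw [eccMatrix, ecc_r hk hr, ecc_r hk hr, min_self]
      show (if (G r).dist (Sum.inr a) (Sum.inr b) = 2 then ((G r).dist (Sum.inr a) (Sum.inr b) : ℝ)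
        else 0) = if a = b ∨ (a.1 = b.1 ∧ (a.1:ℕ) ≠ 0) then 0 else 2
      rcases eq_or_ne a b with rfl | hab
      · rw [if_neg, if_pos (Or.inl rfl)]
        rw [SimpleGraph.dist_self]
        omega
      · by_cases hadj : (G r).Adj (Sum.inr a) (Sum.inr b)
        · rw [if_neg, if_pos]
          · exact Or.inr (adj_rr.mp hadj).2
          · rw [SimpleGraph.dist_eq_one_iff_adj.mpr hadj]
            omega
        · rw [dist_rr hab hadj, if_pos rfl, if_neg]
          · norm_num
          · rintro (h | h)
            · exact hab h
            · exact hadj (adj_rr.mpr ⟨hab, h⟩)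

omit hk hr in
lemma trace_Mex : (Mex r).trace = 0 := by
  rw [Matrix.trace, Fintype.sum_sum_type]
  have h1 : ∀ a : Unit, Matrix.diag (Mex r) (Sum.inl a) = 0 := fun a => rfl
  have h2 : ∀ a : Σ i : Fin (k-1), Fin (r i), Matrix.diag (Mex r) (Sum.inr a) = 0 := by
    intro a
    show (if a = a ∨ (a.1 = a.1 ∧ (a.1:ℕ) ≠ 0) then (0:ℝ) else 2) = 0
    rw [if_pos (Or.inl rfl)]
  simp only [h1, h2, Finset.sum_const_zero]
  simp

end Stmt13Aux

/-- for `k ≥ 4`, the join of a single vertex with the disjoint union of a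
coclique of size `r 0` and cliques of sizes `r 1, …, r (k-2)` (a mixed extension of `S_k`
of type `(1, -r₂, r₃, …, r_k)`) has exactly one positive eccentricity eigenvalue. -/
theorem stmt13 (k : ℕ) (hk : 4 ≤ k) (r : Fin (k - 1) → ℕ) (hr : ∀ i, 1 ≤ r i) :
    posEigCount (eccMatrix_isHermitian (graphJoin (⊤ : SimpleGraph Unit)
      (blocksGraph r (fun i => (i : ℕ) ≠ 0)))) = 1 := by
  classical
  open Stmt13Aux Matrix in
  have hA := eccMatrix_isHermitian (Stmt13Aux.G r)
  have hM : eccMatrix (Stmt13Aux.G r) = Mex r := eccMatrix_eq hk hr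
  -- upper bound
  have le1 : posEigCount hA ≤ 1 := by
    apply posEig_le_one hA (fun u => match u with | Sum.inl _ => 1 | Sum.inr _ => 2)
    intro x hx
    rw [hM, quad_eq]
    have hxx : x (Sum.inl ()) = -2 * ∑ w, x (Sum.inr w) := by
      rw [dotProduct, Fintype.sum_sum_type] at hx
      simp only [Finset.univ_unique, Finset.sum_singleton] at hx
      have : (1:ℝ) * x (Sum.inl default) + ∑ w, 2 * x (Sum.inr w) = 0 := hx
      rw [← Finset.mul_sum] at this
      have hd : (default : Unit) = () := rfl
      rw [hd] at this
      linarith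
    rw [hxx]
    have hD : (0:ℝ) ≤ ∑ i : Fin (k-1), (if (i:ℕ) = 0 then ∑ p, (x (Sum.inr ⟨i,p⟩))^2
        else (∑ p, x (Sum.inr ⟨i,p⟩))^2) := by
      apply Finset.sum_nonneg
      intro i _
      split
      · exact Finset.sum_nonneg fun p _ => sq_nonneg _
      · exact sq_nonneg _
    nlinarith [sq_nonneg (∑ w, x (Sum.inr w))]
  -- lower bound
  have ge1 : 1 ≤ posEigCount hA := by
    by_contra hcon
    push_neg at hcon
    interval_cases h : posEigCount hA
    rw [posEigCount, Finset.card_eq_zero, Finset.filter_eq_empty_iff] at h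
    have hnonpos : ∀ i, hA.eigenvalues i ≤ 0 := fun i => le_of_not_gt (h (Finset.mem_univ i))
    have hsum : ∑ i, hA.eigenvalues i = 0 := by
      rw [← trace_eq_sum_eigs hA, hM, trace_Mex]
    have hall : ∀ i, hA.eigenvalues i = 0 := by
      intro i
      have := (Finset.sum_eq_zero_iff_of_nonpos (fun j _ => hnonpos j)).mp hsum
      exact this i (Finset.mem_univ i)
    have hz : eccMatrix (Stmt13Aux.G r) = 0 := eq_zero_of_eigs_zero hA hall
    have w0 : Σ i : Fin (k-1), Fin (r i) :=
      ⟨⟨0, by omega⟩, ⟨0, by have := hr ⟨0, by omega⟩; omega⟩⟩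
    have hzero : (Mex r) (Sum.inl ()) (Sum.inr w0) = 0 := by rw [← hM, hz]; rfl
    have hone : (Mex r) (Sum.inl ()) (Sum.inr w0) = 1 := rfl
    rw [hone] at hzero
    norm_num at hzero
  omega
end
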